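/- arXiv:1512.07483 — 4 statements merged into one kernel-verified Lean document; each statement's English description precedes it below -/
import Mathlib

section
/- Let E be a complex Banach lattice and let (S_n) be a (not necessarily norm bounded) sequence of positive bounded linear operators on E. Then the set I := { x ∈ E : there exists a sequence (x_n) in E with x_n → x and S_n |x_n| → 0 } is a closed ideal in E. -/
open Filter Topology Asymptotics

noncomputable section

/-- A complex Banach lattice, axiomatized via its order (given by the positive cone),
its modulus map `cabs` and its canonical conjugation `conj`. -/
class ComplexBanachLattice (E : Type*) extends
    NormedAddCommGroup E, NormedSpace ℂ E, CompleteSpace E, PartialOrder E where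
  /-- the modulus map `z ↦ |z|` -/
  cabs : E → E
  /-- the canonical conjugation of the complex Banach lattice -/
  conj : E → E
  add_le_add_left' : ∀ a b : E, a ≤ b → ∀ c : E, c + a ≤ c + b
  smul_nonneg' : ∀ (r : ℝ) (x : E), 0 ≤ r → 0 ≤ x → 0 ≤ (r : ℂ) • x
  isClosed_nonneg : IsClosed {x : E | 0 ≤ x}
  cabs_nonneg : ∀ x : E, 0 ≤ cabs x
  cabs_of_nonneg : ∀ x : E, 0 ≤ x → cabs x = x
  cabs_eq_zero_iff : ∀ x : E, cabs x = 0 ↔ x = 0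
  cabs_smul : ∀ (c : ℂ) (x : E), cabs (c • x) = (‖c‖ : ℂ) • cabs x
  cabs_add_le : ∀ x y : E, cabs (x + y) ≤ cabs x + cabs y
  norm_cabs : ∀ x : E, ‖cabs x‖ = ‖x‖
  norm_mono : ∀ x y : E, cabs x ≤ cabs y → ‖x‖ ≤ ‖y‖
  conj_add : ∀ x y : E, conj (x + y) = conj x + conj y
  conj_smul : ∀ (c : ℂ) (x : E), conj (c • x) = (starRingEnd ℂ c) • conj x
  conj_conj : ∀ x : E, conj (conj x) = x
  conj_of_nonneg : ∀ x : E, 0 ≤ x → conj x = x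
  cabs_conj : ∀ x : E, cabs (conj x) = cabs x
  cabs_isLUB : ∀ x : E, conj x = x → IsLUB {x, -x} (cabs x)
  exists_lub : ∀ x y : E, conj x = x → conj y = y → ∃ z : E, IsLUB {x, y} z

open ComplexBanachLattice

/-- A bounded linear operator on a complex Banach lattice is positive
if it maps positive elements to positive elements. -/
def IsPosOp {E : Type*} [ComplexBanachLattice E] (T : E →L[ℂ] E) : Prop :=
  ∀ x : E, 0 ≤ x → 0 ≤ T x

/-- The set `I` from Lemma 4.4: all `x` admitting a sequence `xₙ → x`
with `Sₙ|xₙ| → 0`. -/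
def idealSet {E : Type*} [ComplexBanachLattice E] (S : ℕ → E →L[ℂ] E) : Set E :=
  {x : E | ∃ u : ℕ → E, Tendsto u atTop (𝓝 x) ∧
    Tendsto (fun n => (S n) (cabs (u n))) atTop (𝓝 0)}

namespace CBLAux

variable {E : Type*} [ComplexBanachLattice E]

lemma sub_nonneg'' {a b : E} : 0 ≤ b - a ↔ a ≤ b := by
  constructor
  · intro h
    have h2 := add_le_add_left' 0 (b - a) h a
    rw [add_zero] at h2
    rwa [show a + (b - a) = b from by abel] at h2
  · intro h
    have h2 := add_le_add_left' a b h (-a)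
    rw [show -a + a = (0:E) from by abel, show -a + b = b - a from by abel] at h2
    exact h2

lemma add_le_add'' {a b c d : E} (h1 : a ≤ b) (h2 : c ≤ d) : a + c ≤ b + d := by
  rw [← sub_nonneg''] at h1 h2 ⊢
  rw [show b + d - (a + c) = (b - a) + (d - c) from by abel]
  have h3 := add_le_add_left' 0 (d - c) h2 (b - a)
  rw [add_zero] at h3
  exact le_trans h1 h3

lemma smul_le_smul'' (r : ℝ) (hr : 0 ≤ r) {x y : E} (h : x ≤ y) :
    (r : ℂ) • x ≤ (r : ℂ) • y := by
  rw [← sub_nonneg''] at h ⊢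
  rw [← smul_sub]
  exact smul_nonneg' r _ hr h

lemma conj_neg' (x : E) : conj (-x) = -conj x := by
  have h := conj_smul (-1 : ℂ) x
  simpa using h

lemma conj_sub' (x y : E) : conj (x - y) = conj x - conj y := by
  rw [sub_eq_add_neg, conj_add, conj_neg', ← sub_eq_add_neg]

lemma cabs_neg' (x : E) : cabs (-x) = cabs x := by
  have h := cabs_smul (-1 : ℂ) x
  simpa using h

lemma norm_cabs_sub_cabs (a b : E) : ‖cabs a - cabs b‖ ≤ ‖a - b‖ := by
  have hconj : conj (cabs a - cabs b) = cabs a - cabs b := by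
    rw [conj_sub', conj_of_nonneg _ (cabs_nonneg a), conj_of_nonneg _ (cabs_nonneg b)]
  have h1 : cabs a - cabs b ≤ cabs (a - b) := by
    have h := cabs_add_le (a - b) b
    rw [show a - b + b = a from by abel] at h
    rw [← sub_nonneg''] at h ⊢
    rwa [show cabs (a - b) - (cabs a - cabs b) = cabs (a - b) + cabs b - cabs a from by abel]
  have h2 : -(cabs a - cabs b) ≤ cabs (a - b) := by
    have h := cabs_add_le (b - a) a
    rw [show b - a + a = b from by abel] at h
    rw [show b - a = -(a - b) from by abel, cabs_neg'] at h
    rw [← sub_nonneg''] at h ⊢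
    rwa [show cabs (a - b) - -(cabs a - cabs b) = cabs (a - b) + cabs a - cabs b from by abel]
  have hle : cabs (cabs a - cabs b) ≤ cabs (a - b) := by
    apply (cabs_isLUB _ hconj).2
    intro z hz
    rcases hz with rfl | hz
    · exact h1
    · rw [Set.mem_singleton_iff] at hz
      subst hz
      exact h2
  exact norm_mono _ _ hle

lemma continuous_cabs : Continuous (cabs : E → E) := by
  apply (LipschitzWith.of_dist_le_mul (K := 1) (f := (cabs : E → E)) ?_).continuous
  intro a b
  rw [dist_eq_norm, dist_eq_norm]
  simpa using norm_cabs_sub_cabs a b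

lemma posop_mono {T : E →L[ℂ] E} (hT : IsPosOp T) {a b : E} (h : a ≤ b) : T a ≤ T b := by
  rw [← sub_nonneg''] at h ⊢
  have h2 := hT _ h
  rwa [map_sub] at h2

lemma tendsto_zero_of_le {f g : ℕ → E} (hf : ∀ n, 0 ≤ f n) (hfg : ∀ n, f n ≤ g n)
    (hg : Tendsto g atTop (𝓝 0)) : Tendsto f atTop (𝓝 0) := by
  rw [tendsto_zero_iff_norm_tendsto_zero]
  refine squeeze_zero (g := fun n => ‖g n‖) (fun n => norm_nonneg _) (fun n => ?_) ?_
  · exact norm_mono _ _ (by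
      rw [cabs_of_nonneg _ (hf n), cabs_of_nonneg _ ((hf n).trans (hfg n))]
      exact hfg n)
  · simpa using hg.norm

lemma cabs_zero : cabs (0 : E) = 0 := cabs_of_nonneg 0 le_rfl

lemma zero_mem (S : ℕ → E →L[ℂ] E) : (0 : E) ∈ idealSet S := by
  refine ⟨fun _ => 0, tendsto_const_nhds, ?_⟩
  simp only [cabs_zero, map_zero]
  exact tendsto_const_nhds

lemma add_mem {S : ℕ → E →L[ℂ] E} (hSpos : ∀ n, IsPosOp (S n)) {x y : E}
    (hx : x ∈ idealSet S) (hy : y ∈ idealSet S) : x + y ∈ idealSet S := by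
  obtain ⟨u, hu, hSu⟩ := hx
  obtain ⟨v, hv, hSv⟩ := hy
  refine ⟨fun n => u n + v n, hu.add hv, ?_⟩
  apply tendsto_zero_of_le (g := fun n => S n (cabs (u n)) + S n (cabs (v n)))
  · exact fun n => hSpos n _ (cabs_nonneg _)
  · intro n
    have h := posop_mono (hSpos n) (cabs_add_le (u n) (v n))
    rwa [map_add] at h
  · simpa using hSu.add hSv

lemma smul_mem {S : ℕ → E →L[ℂ] E} (c : ℂ) {x : E}
    (hx : x ∈ idealSet S) : c • x ∈ idealSet S := by
  obtain ⟨u, hu, hSu⟩ := hx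
  refine ⟨fun n => c • u n, hu.const_smul c, ?_⟩
  have heq : (fun n => S n (cabs (c • u n))) = fun n => (‖c‖ : ℂ) • S n (cabs (u n)) := by
    funext n
    rw [cabs_smul, map_smul]
  rw [heq]
  simpa using hSu.const_smul ((‖c‖ : ℂ))

/-- The core case: a nonnegative element dominated by `cabs x` for some `x ∈ idealSet S`
lies in `idealSet S`. -/
lemma pos_mem {S : ℕ → E →L[ℂ] E} (hSpos : ∀ n, IsPosOp (S n)) {x y : E}
    (hx : x ∈ idealSet S) (hy : 0 ≤ y) (hyx : y ≤ cabs x) : y ∈ idealSet S := by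
  obtain ⟨u, hu, hSu⟩ := hx
  set c : ℂ := ((2⁻¹ : ℝ) : ℂ) with hc
  set r : ℕ → E := fun n => c • (y + cabs (u n) - cabs (y - cabs (u n))) with hr
  have key : ∀ n, 0 ≤ r n ∧ r n ≤ cabs (u n) := by
    intro n
    set b : E := cabs (u n) with hbdef
    have hb : 0 ≤ b := cabs_nonneg _
    have hconj : conj (y - b) = y - b := by
      rw [conj_sub', conj_of_nonneg _ hy, conj_of_nonneg _ hb]
    have hlub := cabs_isLUB (y - b) hconj
    have h1 : y - b ≤ cabs (y - b) := hlub.1 (Set.mem_insert _ _)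
    have h2 : cabs (y - b) ≤ y + b := by
      apply hlub.2
      intro z hz
      rcases hz with rfl | hz
      · rw [← sub_nonneg'', show y + b - (y - b) = b + b from by abel]
        have := add_le_add'' hb hb
        simpa using this
      · rw [Set.mem_singleton_iff] at hz
        subst hz
        rw [← sub_nonneg'', show y + b - -(y - b) = y + y from by abel]
        have := add_le_add'' hy hy
        simpa using this
    constructor
    · exact smul_nonneg' _ _ (by norm_num) (sub_nonneg''.mpr h2)
    · have h3 : y + b - cabs (y - b) ≤ b + b := by
        rw [← sub_nonneg''] at h1 ⊢
        rwa [show b + b - (y + b - cabs (y - b)) = cabs (y - b) - (y - b) from by abel]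
      have h4 := smul_le_smul'' (2⁻¹ : ℝ) (by norm_num) h3
      have e2 : c • (b + b) = b := by
        rw [← two_smul ℂ b, smul_smul, hc]
        norm_num
      calc r n = c • (y + b - cabs (y - b)) := rfl
        _ ≤ c • (b + b) := h4
        _ = b := e2
  have hbx : Tendsto (fun n => cabs (u n)) atTop (𝓝 (cabs x)) :=
    (continuous_cabs.tendsto x).comp hu
  have h5 : Tendsto r atTop (𝓝 (c • (y + cabs x - cabs (y - cabs x)))) := by
    apply Tendsto.const_smul
    exact (tendsto_const_nhds.add hbx).sub
      ((continuous_cabs.tendsto _).comp (tendsto_const_nhds.sub hbx))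
  have e3 : c • (y + cabs x - cabs (y - cabs x)) = y := by
    rw [show y - cabs x = -(cabs x - y) from by abel, cabs_neg',
      cabs_of_nonneg _ (sub_nonneg''.mpr hyx),
      show y + cabs x - (cabs x - y) = y + y from by abel,
      ← two_smul ℂ y, smul_smul, hc]
    norm_num
  rw [e3] at h5
  refine ⟨r, h5, ?_⟩
  have heq : (fun n => S n (cabs (r n))) = fun n => S n (r n) := by
    funext n
    rw [cabs_of_nonneg _ (key n).1]
  rw [heq]
  exact tendsto_zero_of_le (fun n => hSpos n _ (key n).1)
    (fun n => posop_mono (hSpos n) (key n).2) hSu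

/-- Self-conjugate elements dominated by `cabs x` lie in the ideal. -/
lemma selfconj_mem {S : ℕ → E →L[ℂ] E} (hSpos : ∀ n, IsPosOp (S n)) {x z : E}
    (hx : x ∈ idealSet S) (hz : conj z = z) (hzx : cabs z ≤ cabs x) : z ∈ idealSet S := by
  set c : ℂ := ((2⁻¹ : ℝ) : ℂ) with hc
  have hlub := cabs_isLUB z hz
  have h1 : z ≤ cabs z := hlub.1 (Set.mem_insert _ _)
  have h2 : -z ≤ cabs z := hlub.1 (by simp)
  have hp : (0:E) ≤ cabs z + z := by
    rw [← sub_nonneg''] at h2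
    rwa [show cabs z - -z = cabs z + z from by abel] at h2
  have hm : (0:E) ≤ cabs z - z := sub_nonneg''.mpr h1
  have hple : c • (cabs z + z) ≤ cabs x := by
    have h3 : cabs z + z ≤ cabs z + cabs z := add_le_add'' le_rfl h1
    have h4 := smul_le_smul'' (2⁻¹ : ℝ) (by norm_num) h3
    have e2 : ((2⁻¹:ℝ):ℂ) • (cabs z + cabs z) = cabs z := by
      rw [← two_smul ℂ (cabs z), smul_smul]; norm_num
    rw [e2] at h4
    exact le_trans h4 hzx
  have hmle : c • (cabs z - z) ≤ cabs x := by
    have h3 : cabs z - z ≤ cabs z + cabs z := by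
      rw [← sub_nonneg''] at h2 ⊢
      rwa [show cabs z + cabs z - (cabs z - z) = cabs z - -z from by abel]
    have h4 := smul_le_smul'' (2⁻¹ : ℝ) (by norm_num) h3
    have e2 : ((2⁻¹:ℝ):ℂ) • (cabs z + cabs z) = cabs z := by
      rw [← two_smul ℂ (cabs z), smul_smul]; norm_num
    rw [e2] at h4
    exact le_trans h4 hzx
  have hpmem : c • (cabs z + z) ∈ idealSet S :=
    pos_mem hSpos hx (smul_nonneg' _ _ (by norm_num) hp) hple
  have hmmem : c • (cabs z - z) ∈ idealSet S :=
    pos_mem hSpos hx (smul_nonneg' _ _ (by norm_num) hm) hmle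
  have hdecomp : c • (cabs z + z) + (-1 : ℂ) • (c • (cabs z - z)) = z := by
    rw [neg_one_smul, ← sub_eq_add_neg, ← smul_sub,
      show (cabs z + z) - (cabs z - z) = z + z from by abel,
      ← two_smul ℂ z, smul_smul, hc]
    norm_num
  rw [← hdecomp]
  exact add_mem hSpos hpmem (smul_mem _ hmmem)

end CBLAux

open CBLAux in
/-- Lemma 4.4(a): for a (not necessarily norm bounded) sequence `(Sₙ)` of positive
operators on a complex Banach lattice `E`, the set
`I = {x | ∃ xₙ → x with Sₙ|xₙ| → 0}` is a closed ideal in `E`. -/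
theorem idealSet_isClosedIdeal
    {E : Type*} [ComplexBanachLattice E] (S : ℕ → E →L[ℂ] E)
    (hSpos : ∀ n, IsPosOp (S n)) :
    IsClosed (idealSet S) ∧
    (0 : E) ∈ idealSet S ∧
    (∀ x ∈ idealSet S, ∀ y ∈ idealSet S, x + y ∈ idealSet S) ∧
    (∀ (c : ℂ), ∀ x ∈ idealSet S, c • x ∈ idealSet S) ∧
    (∀ x ∈ idealSet S, ∀ y : E, cabs y ≤ cabs x → y ∈ idealSet S) := by
  refine ⟨?_, zero_mem S, fun x hx y hy => add_mem hSpos hx hy,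
    fun c x hx => smul_mem c hx, ?_⟩
  · -- closedness
    refine isClosed_of_closure_subset ?_
    intro x hx
    have hy : ∀ k : ℕ, ∃ y ∈ idealSet S, dist x y < 1/(k+1) := fun k =>
      Metric.mem_closure_iff.mp hx _ (by positivity)
    choose y hyI hyd using hy
    choose u hu hSu using hyI
    have hN1' : ∀ k : ℕ, ∃ N, ∀ n ≥ N, dist (u k n) (y k) < 1/(k+1) := fun k =>
      Metric.tendsto_atTop.mp (hu k) _ (by positivity)
    have hN2' : ∀ k : ℕ, ∃ N, ∀ n ≥ N, dist (S n (cabs (u k n))) 0 < 1/(k+1) := fun k =>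
      Metric.tendsto_atTop.mp (hSu k) _ (by positivity)
    choose N1 hN1 using hN1'
    choose N2 hN2 using hN2'
    set N : ℕ → ℕ := fun k => max (N1 k) (N2 k) with hNdef
    set m : ℕ → ℕ := fun k => Nat.rec (N 0) (fun k ih => max (ih + 1) (N (k+1))) k with hm
    have hm0 : m 0 = N 0 := rfl
    have hmsucc : ∀ k, m (k+1) = max (m k + 1) (N (k+1)) := fun _ => rfl
    have hmN : ∀ k, N k ≤ m k := by
      intro k
      cases k with
      | zero => exact le_of_eq hm0.symm
      | succ k => rw [hmsucc]; exact le_max_right _ _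
    set K : ℕ → ℕ := fun n => Nat.findGreatest (fun j => m j ≤ n) n with hK
    have hKspec : ∀ n, m 0 ≤ n → m (K n) ≤ n := fun n hn =>
      Nat.findGreatest_spec (P := fun j => m j ≤ n) (Nat.zero_le n) hn
    have hKtop : Tendsto K atTop atTop := by
      rw [tendsto_atTop_atTop]
      intro b
      refine ⟨max (m b) b, fun a ha => ?_⟩
      exact Nat.le_findGreatest (le_trans (le_max_right _ _) ha)
        (le_trans (le_max_left _ _) ha)
    set w : ℕ → E := fun n => u (K n) n with hw
    have h0 : Tendsto (fun n => 1/((K n : ℝ)+1)) atTop (𝓝 0) :=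
      tendsto_one_div_add_atTop_nhds_zero_nat.comp hKtop
    have hbd : ∀ n, m 0 ≤ n →
        dist (w n) x ≤ 1/((K n : ℝ)+1) + 1/((K n : ℝ)+1) ∧
        dist (S n (cabs (w n))) 0 ≤ 1/((K n : ℝ)+1) := by
      intro n hn
      have h1 : m (K n) ≤ n := hKspec n hn
      have h2 : N (K n) ≤ n := le_trans (hmN _) h1
      constructor
      · calc dist (w n) x ≤ dist (w n) (y (K n)) + dist (y (K n)) x := dist_triangle _ _ _
          _ ≤ 1/((K n : ℝ)+1) + 1/((K n : ℝ)+1) := by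
            apply add_le_add
            · exact le_of_lt (hN1 (K n) n (le_trans (le_max_left _ _) h2))
            · rw [dist_comm]
              exact le_of_lt (hyd (K n))
      · exact le_of_lt (hN2 (K n) n (le_trans (le_max_right _ _) h2))
    refine ⟨w, ?_, ?_⟩
    · rw [tendsto_iff_dist_tendsto_zero]
      refine squeeze_zero' (g := fun n => 1/((K n : ℝ)+1) + 1/((K n : ℝ)+1))
        (Eventually.of_forall fun n => dist_nonneg) ?_ ?_
      · exact Filter.eventually_atTop.mpr ⟨m 0, fun n hn => (hbd n hn).1⟩
      · simpa using h0.add h0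
    · rw [tendsto_iff_dist_tendsto_zero]
      refine squeeze_zero' (g := fun n => 1/((K n : ℝ)+1))
        (Eventually.of_forall fun n => dist_nonneg) ?_ h0
      exact Filter.eventually_atTop.mpr ⟨m 0, fun n hn => (hbd n hn).2⟩
  · -- ideal property
    intro x hx y hyx
    set c : ℂ := ((2⁻¹ : ℝ) : ℂ) with hc
    set re : E := c • (y + conj y) with hre
    set im : E := (-Complex.I * c) • (y - conj y) with him
    have hre_conj : conj re = re := by
      rw [hre, conj_smul, conj_add, conj_conj]
      rw [show starRingEnd ℂ c = c from by rw [hc]; exact Complex.conj_ofReal _]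
      rw [add_comm (conj y) y]
    have him_conj : conj im = im := by
      rw [him, conj_smul, conj_sub', conj_conj]
      rw [show starRingEnd ℂ (-Complex.I * c) = Complex.I * c from by
        rw [hc, map_mul, map_neg, Complex.conj_I, Complex.conj_ofReal, neg_neg]]
      rw [show conj y - y = -(y - conj y) from by abel, smul_neg, ← neg_smul, neg_mul]
    have half_cabs : ∀ w : E, cabs w ≤ cabs y + cabs y →
        ((2⁻¹:ℝ):ℂ) • cabs w ≤ cabs x := by
      intro w hw
      have h4 := smul_le_smul'' (2⁻¹ : ℝ) (by norm_num) hw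
      have e2 : ((2⁻¹:ℝ):ℂ) • (cabs y + cabs y) = cabs y := by
        rw [← two_smul ℂ (cabs y), smul_smul]; norm_num
      rw [e2] at h4
      exact le_trans h4 hyx
    have hre_le : cabs re ≤ cabs x := by
      rw [hre, cabs_smul]
      rw [show ((‖c‖:ℝ):ℂ) = ((2⁻¹:ℝ):ℂ) from by rw [hc]; norm_num]
      apply half_cabs
      have h := cabs_add_le y (conj y)
      rwa [cabs_conj] at h
    have him_le : cabs im ≤ cabs x := by
      rw [him, cabs_smul]
      rw [show ((‖-Complex.I * c‖:ℝ):ℂ) = ((2⁻¹:ℝ):ℂ) from by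
        rw [hc]; simp [norm_mul]]
      apply half_cabs
      have h := cabs_add_le y (-(conj y))
      rw [← sub_eq_add_neg, cabs_neg', cabs_conj] at h
      exact h
    have hremem : re ∈ idealSet S := selfconj_mem hSpos hx hre_conj hre_le
    have himmem : im ∈ idealSet S := selfconj_mem hSpos hx him_conj him_le
    have hIc : Complex.I * (-Complex.I * c) = c := by
      rw [← mul_assoc, mul_neg, Complex.I_mul_I, neg_neg, one_mul]
    have hdecomp : re + Complex.I • im = y := by
      rw [hre, him, smul_smul, hIc, ← smul_add,
        show (y + conj y) + (y - conj y) = y + y from by abel,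
        ← two_smul ℂ y, smul_smul, hc]
      norm_num
    rw [← hdecomp]
    exact add_mem hSpos hremem (smul_mem _ himmem)
end
end

section
/- Let E be a complex Banach lattice, let (S_n) be a sequence of positive bounded linear operators on E, and let I := { x ∈ E : there exists a sequence (x_n) in E with x_n → x and S_n |x_n| → 0 }. If T is a positive bounded linear operator on E which commutes with all operators S_n, then I is invariant under T, i.e. T I ⊆ I. -/
open Filter Topology Asymptotics

noncomputable section

open ComplexBanachLattice

section Helpers

variable {E : Type*} [ComplexBanachLattice E]

lemma my_le_iff {a b : E} : a ≤ b ↔ 0 ≤ b - a := by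
  constructor
  · intro h
    have := add_le_add_left' a b h (-a)
    simpa [neg_add_cancel, sub_eq_neg_add] using this
  · intro h
    have := add_le_add_left' 0 (b - a) h a
    simpa using this

lemma my_add_le_add {a b c d : E} (h1 : a ≤ b) (h2 : c ≤ d) : a + c ≤ b + d := by
  have H1 : a + c ≤ b + c := by
    have := add_le_add_left' a b h1 c
    simpa [add_comm] using this
  exact le_trans H1 (add_le_add_left' c d h2 b)

lemma my_smul_le (r : ℝ) (hr : 0 ≤ r) {a b : E} (h : a ≤ b) :
    (r : ℂ) • a ≤ (r : ℂ) • b := by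
  rw [my_le_iff] at h ⊢
  have := smul_nonneg' r (b - a) hr h
  simpa [smul_sub] using this

lemma my_mono {T : E →L[ℂ] E} (hT : IsPosOp T) {a b : E} (h : a ≤ b) : T a ≤ T b := by
  rw [my_le_iff] at h ⊢
  have := hT _ h
  simpa [map_sub] using this

lemma my_conj_neg (x : E) : conj (-x) = -conj x := by
  have := conj_smul (-1 : ℂ) x
  simpa using this

lemma my_conj_sub (x y : E) : conj (x - y) = conj x - conj y := by
  rw [sub_eq_add_neg, conj_add, my_conj_neg, sub_eq_add_neg]

lemma my_self_le_cabs {z : E} (hz : conj z = z) : z ≤ cabs z :=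
  (cabs_isLUB z hz).1 (Set.mem_insert _ _)

lemma my_neg_le_cabs {z : E} (hz : conj z = z) : -z ≤ cabs z :=
  (cabs_isLUB z hz).1 (Set.mem_insert_of_mem _ rfl)

lemma my_conj_cabs (x : E) : conj (cabs x) = cabs x :=
  conj_of_nonneg _ (cabs_nonneg x)

lemma my_conj_T {T : E →L[ℂ] E} (hT : IsPosOp T) {z : E} (hz : conj z = z) :
    conj (T z) = T z := by
  set p := ((2⁻¹ : ℝ) : ℂ) • (cabs z + z) with hp
  set q := ((2⁻¹ : ℝ) : ℂ) • (cabs z - z) with hq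
  have hp0 : 0 ≤ p := by
    apply smul_nonneg' _ _ (by norm_num)
    have := my_neg_le_cabs hz
    rw [my_le_iff] at this
    simpa [sub_neg_eq_add] using this
  have hq0 : 0 ≤ q := by
    apply smul_nonneg' _ _ (by norm_num)
    have := my_self_le_cabs hz
    rw [my_le_iff] at this
    exact this
  have hzpq : z = p - q := by
    rw [hp, hq]
    push_cast
    module
  have : T z = T p - T q := by rw [hzpq, map_sub]
  rw [this, my_conj_sub, conj_of_nonneg _ (hT _ hp0), conj_of_nonneg _ (hT _ hq0)]

lemma my_cabs_T_le_self_conj {T : E →L[ℂ] E} (hT : IsPosOp T) {z : E}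
    (hz : conj z = z) : cabs (T z) ≤ T (cabs z) := by
  apply (cabs_isLUB (T z) (my_conj_T hT hz)).2
  rintro w (rfl | rfl)
  · exact my_mono hT (my_self_le_cabs hz)
  · have : -(T z) = T (-z) := by simp
    rw [this]
    exact my_mono hT (my_neg_le_cabs hz)

lemma my_cabs_neg (x : E) : cabs (-x) = cabs x := by
  have := cabs_smul (-1 : ℂ) x
  simpa using this

/-- Key estimate: `|T y| ≤ T (2 |y|)` for a positive operator `T`. -/
lemma my_cabs_T_le {T : E →L[ℂ] E} (hT : IsPosOp T) (y : E) :
    cabs (T y) ≤ T ((2 : ℂ) • cabs y) := by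
  set a := ((2⁻¹ : ℝ) : ℂ) • (y + conj y) with ha
  set b := ((2⁻¹ : ℝ) : ℂ) • ((-Complex.I) • (y - conj y)) with hb
  have hca : conj a = a := by
    rw [ha, conj_smul, conj_add, conj_conj, Complex.conj_ofReal, add_comm]
  have hcb : conj b = b := by
    rw [hb, conj_smul, conj_smul, my_conj_sub, conj_conj]
    simp only [map_neg, Complex.conj_I, Complex.conj_ofReal, neg_neg]
    module
  have hy : y = a + Complex.I • b := by
    rw [ha, hb]
    have hI : Complex.I * ((2⁻¹:ℝ):ℂ) * -Complex.I = ((2⁻¹:ℝ):ℂ) := by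
      ring_nf
      simp [Complex.I_sq]
    rw [smul_smul, smul_smul, hI]
    module
  have half_nonneg : (0:ℝ) ≤ 2⁻¹ := by norm_num
  have hbound : ∀ w : E, cabs w ≤ (2:ℂ) • cabs y →
      ((2⁻¹ : ℝ):ℂ) • cabs w ≤ cabs y := by
    intro w hw
    have := my_smul_le 2⁻¹ half_nonneg hw
    have h2 : ((2⁻¹ : ℝ):ℂ) • ((2:ℂ) • cabs y) = cabs y := by
      rw [smul_smul]; norm_num
    rwa [h2] at this
  have haa : cabs a ≤ cabs y := by
    have h1 : cabs a = ((2⁻¹ : ℝ):ℂ) • cabs (y + conj y) := by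
      rw [ha, cabs_smul]
      norm_num
    rw [h1]
    apply hbound
    calc cabs (y + conj y) ≤ cabs y + cabs (conj y) := cabs_add_le _ _
    _ = (2:ℂ) • cabs y := by rw [cabs_conj, two_smul]
  have hbb : cabs b ≤ cabs y := by
    have h1 : cabs b = ((2⁻¹ : ℝ):ℂ) • cabs (y - conj y) := by
      rw [hb, cabs_smul, cabs_smul]
      norm_num
    rw [h1]
    apply hbound
    calc cabs (y - conj y) = cabs (y + (-conj y)) := by rw [sub_eq_add_neg]
    _ ≤ cabs y + cabs (-conj y) := cabs_add_le _ _
    _ = (2:ℂ) • cabs y := by rw [my_cabs_neg, cabs_conj, two_smul]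
  calc cabs (T y) = cabs (T a + Complex.I • T b) := by
        rw [hy]; simp [map_add, map_smul]
    _ ≤ cabs (T a) + cabs (Complex.I • T b) := cabs_add_le _ _
    _ = cabs (T a) + cabs (T b) := by
        rw [cabs_smul]; simp
    _ ≤ T (cabs a) + T (cabs b) :=
        my_add_le_add (my_cabs_T_le_self_conj hT hca) (my_cabs_T_le_self_conj hT hcb)
    _ ≤ T (cabs y) + T (cabs y) :=
        my_add_le_add (my_mono hT haa) (my_mono hT hbb)
    _ = T ((2:ℂ) • cabs y) := by rw [two_smul, map_add]

end Helpers

/-- Lemma 4.4(b): if `T` is a positive operator commuting with all the positive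
operators `Sₙ`, then the ideal `I = {x | ∃ xₙ → x with Sₙ|xₙ| → 0}` is `T`-invariant. -/
theorem idealSet_invariant
    {E : Type*} [ComplexBanachLattice E] (S : ℕ → E →L[ℂ] E)
    (hSpos : ∀ n, IsPosOp (S n))
    (T : E →L[ℂ] E) (hTpos : IsPosOp T)
    (hcomm : ∀ n, ∀ x : E, (S n) (T x) = T ((S n) x)) :
    ∀ x ∈ idealSet S, T x ∈ idealSet S := by
  rintro x ⟨u, hu, hSu⟩
  refine ⟨fun n => T (u n), (T.continuous.tendsto x).comp hu, ?_⟩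
  apply squeeze_zero_norm (a := fun n => ‖(2:ℂ) • T ((S n) (cabs (u n)))‖)
  · intro n
    apply norm_mono
    have h1 : 0 ≤ (S n) (cabs (T (u n))) := hSpos n _ (cabs_nonneg _)
    have h2 : (S n) (cabs (T (u n))) ≤ (2:ℂ) • T ((S n) (cabs (u n))) := by
      have := my_mono (hSpos n) (my_cabs_T_le hTpos (u n))
      calc (S n) (cabs (T (u n))) ≤ (S n) (T ((2:ℂ) • cabs (u n))) := this
      _ = (2:ℂ) • T ((S n) (cabs (u n))) := by
          simp only [map_smul]
          rw [hcomm n]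
    have h3 : 0 ≤ (2:ℂ) • T ((S n) (cabs (u n))) := by
      have : (2:ℂ) = ((2:ℝ):ℂ) := by norm_num
      rw [this]
      exact smul_nonneg' 2 _ (by norm_num) (hTpos _ (hSpos n _ (cabs_nonneg _)))
    rw [cabs_of_nonneg _ h1, cabs_of_nonneg _ h3]
    exact h2
  · have : Tendsto (fun n => (2:ℂ) • T ((S n) (cabs (u n)))) atTop (𝓝 0) := by
      have := (T.continuous.tendsto 0).comp hSu
      simpa [Function.comp_def] using ((continuous_const_smul (2:ℂ)).tendsto (0:E)).comp
        (by simpa [Function.comp_def] using this)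
    simpa [Function.comp_def] using (continuous_norm.tendsto (0:E)).comp this
end
end

section
/- Let E be a real or complex Banach lattice and let x, y ∈ E with x ≥ 0 and y ≥ 0. Then the following assertions are equivalent: (i) x lies in the closure of the principal ideal E_y; (ii) ‖(y − sx)⁻‖ = o(s) as s ↓ 0. -/
open Filter Topology Asymptotics

noncomputable section

open ComplexBanachLattice

/-- The negative part `u⁻ = (|u| - u)/2` of a (real) element `u`. -/
def negPart {E : Type*} [ComplexBanachLattice E] (u : E) : E :=
  ((2⁻¹ : ℝ) : ℂ) • (cabs u - u)

section Aux

variable {E : Type*} [ComplexBanachLattice E]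

instance (priority := 100) : CovariantClass E E (· + ·) (· ≤ ·) :=
  ⟨fun c a b h => add_le_add_left' a b h c⟩

instance (priority := 100) : CovariantClass E E (Function.swap (· + ·)) (· ≤ ·) :=
  ⟨fun c a b h => by
    have := add_le_add_left' a b h c
    simpa [add_comm] using this⟩

/-- The positive part `u⁺ = (|u| + u)/2`. -/
def posPart' (u : E) : E := ((2⁻¹ : ℝ) : ℂ) • (cabs u + u)

lemma csmul_le_csmul {s : ℝ} (hs : 0 ≤ s) {a b : E} (h : a ≤ b) :
    ((s : ℝ) : ℂ) • a ≤ ((s : ℝ) : ℂ) • b := by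
  have h0 : (0 : E) ≤ b - a := sub_nonneg.2 h
  have := smul_nonneg' s (b - a) hs h0
  rw [smul_sub] at this
  exact sub_nonneg.1 this

lemma half_smul_two (u : E) : ((2⁻¹ : ℝ) : ℂ) • (u + u) = u := by
  rw [← two_smul ℂ u, smul_smul]
  norm_num

lemma conj_zero'' : conj (0 : E) = 0 := conj_of_nonneg 0 le_rfl

lemma conj_neg'' (u : E) : conj (-u) = -conj u := by
  have h := conj_add u (-u)
  rw [add_neg_cancel, conj_zero''] at h
  exact eq_neg_of_add_eq_zero_right h.symm

lemma conj_sub'' (u v : E) : conj (u - v) = conj u - conj v := by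
  rw [sub_eq_add_neg, conj_add, conj_neg'', sub_eq_add_neg]

lemma conj_real_smul (s : ℝ) {u : E} (hu : conj u = u) :
    conj (((s : ℝ) : ℂ) • u) = ((s : ℝ) : ℂ) • u := by
  rw [conj_smul, Complex.conj_ofReal, hu]

lemma cabs_neg'' (u : E) : cabs (-u) = cabs u := by
  have := cabs_smul (-1 : ℂ) u
  simpa using this

lemma le_cabs' {u : E} (hu : conj u = u) : u ≤ cabs u :=
  (cabs_isLUB u hu).1 (Set.mem_insert _ _)

lemma neg_le_cabs' {u : E} (hu : conj u = u) : -u ≤ cabs u :=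
  (cabs_isLUB u hu).1 (Set.mem_insert_of_mem _ rfl)

lemma cabs_le' {u : E} (hu : conj u = u) {v : E} (h1 : u ≤ v) (h2 : -u ≤ v) :
    cabs u ≤ v := by
  refine (cabs_isLUB u hu).2 ?_
  intro w hw
  rcases hw with rfl | hw
  · exact h1
  · rw [Set.mem_singleton_iff] at hw
    subst hw
    exact h2

lemma le_posPart' {u : E} (hu : conj u = u) : u ≤ posPart' u := by
  have h : u + u ≤ cabs u + u := add_le_add_left (le_cabs' hu) u
  calc u = ((2⁻¹ : ℝ) : ℂ) • (u + u) := (half_smul_two u).symm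
    _ ≤ ((2⁻¹ : ℝ) : ℂ) • (cabs u + u) := csmul_le_csmul (by norm_num) h
    _ = posPart' u := rfl

lemma posPart'_nonneg {u : E} (hu : conj u = u) : 0 ≤ posPart' u := by
  have h : (0 : E) ≤ cabs u + u := by
    have := neg_le_cabs' hu
    have h' : (0 : E) ≤ cabs u - -u := sub_nonneg.2 this
    simpa [sub_neg_eq_add] using h'
  exact smul_nonneg' _ _ (by norm_num) h

lemma posPart'_le {u : E} (hu : conj u = u) {v : E} (h1 : u ≤ v) (h2 : 0 ≤ v) :
    posPart' u ≤ v := by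
  have hcab : cabs u ≤ v + v - u := by
    refine cabs_le' hu ?_ ?_
    · have h3 : u + u ≤ v + v := add_le_add h1 h1
      have : (0 : E) ≤ v + v - (u + u) := sub_nonneg.2 h3
      have e : v + v - (u + u) = (v + v - u) - u := by abel
      rw [e] at this
      exact sub_nonneg.1 this
    · have h3 : (0 : E) ≤ v + v := add_nonneg h2 h2
      have : -u + 0 ≤ -u + (v + v) := add_le_add_right h3 (-u)
      calc -u = -u + 0 := (add_zero _).symm
        _ ≤ -u + (v + v) := this
        _ = v + v - u := by abel
  have h4 : cabs u + u ≤ v + v := by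
    have := add_le_add_left hcab u
    calc cabs u + u ≤ (v + v - u) + u := this
      _ = v + v := by abel
  calc posPart' u = ((2⁻¹ : ℝ) : ℂ) • (cabs u + u) := rfl
    _ ≤ ((2⁻¹ : ℝ) : ℂ) • (v + v) := csmul_le_csmul (by norm_num) h4
    _ = v := half_smul_two v

lemma posPart'_of_nonpos {u : E} (hu : conj u = u) (h : u ≤ 0) : posPart' u = 0 := by
  have hneg : (0 : E) ≤ -u := neg_nonneg.2 h
  have h1 : cabs u = -u := by
    refine le_antisymm (cabs_le' hu (h.trans hneg) le_rfl) (neg_le_cabs' hu)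
  rw [posPart', h1]
  simp

lemma posPart'_add_le (u v : E) : posPart' (u + v) ≤ posPart' u + posPart' v := by
  have h : cabs (u + v) + (u + v) ≤ (cabs u + u) + (cabs v + v) := by
    have := add_le_add_left (cabs_add_le u v) (u + v)
    calc cabs (u + v) + (u + v) ≤ (cabs u + cabs v) + (u + v) := this
      _ = (cabs u + u) + (cabs v + v) := by abel
  calc posPart' (u + v) = ((2⁻¹ : ℝ) : ℂ) • (cabs (u + v) + (u + v)) := rfl
    _ ≤ ((2⁻¹ : ℝ) : ℂ) • ((cabs u + u) + (cabs v + v)) := csmul_le_csmul (by norm_num) h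
    _ = posPart' u + posPart' v := by rw [smul_add]; rfl

lemma posPart'_smul {s : ℝ} (hs : 0 ≤ s) (u : E) :
    posPart' (((s : ℝ) : ℂ) • u) = ((s : ℝ) : ℂ) • posPart' u := by
  have hnorm : (‖((s : ℝ) : ℂ)‖ : ℂ) = ((s : ℝ) : ℂ) := by
    rw [Complex.norm_real]
    norm_cast
    exact abs_of_nonneg hs
  rw [posPart', cabs_smul, hnorm, ← smul_add, posPart', smul_comm]

lemma negPart_eq_posPart'_neg (u : E) : negPart u = posPart' (-u) := by
  show ((2⁻¹ : ℝ) : ℂ) • (cabs u - u) = _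
  rw [posPart', cabs_neg'', sub_eq_add_neg]

lemma norm_le_of_cabs_le {a b : E} (ha : 0 ≤ a) (h : a ≤ cabs b) : ‖a‖ ≤ ‖b‖ := by
  have : cabs a ≤ cabs b := by rw [cabs_of_nonneg a ha]; exact h
  exact norm_mono a b this

/-- Reverse triangle inequality: `‖x - |z|‖ ≤ ‖x - z‖` for `x ≥ 0`. -/
lemma norm_sub_cabs_le {x z : E} (hx : 0 ≤ x) : ‖x - cabs z‖ ≤ ‖x - z‖ := by
  have hxr : conj x = x := conj_of_nonneg x hx
  have hzr : conj (cabs z) = cabs z := conj_of_nonneg _ (cabs_nonneg z)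
  have hd : conj (x - cabs z) = x - cabs z := by rw [conj_sub'', hxr, hzr]
  have h1 : x - cabs z ≤ cabs (x - z) := by
    have : cabs x ≤ cabs (x - z) + cabs z := by
      have e : x = (x - z) + z := by abel
      calc cabs x = cabs ((x - z) + z) := by rw [← e]
        _ ≤ cabs (x - z) + cabs z := cabs_add_le _ _
    rw [cabs_of_nonneg x hx] at this
    have : x - cabs z ≤ (cabs (x - z) + cabs z) - cabs z := sub_le_sub_right this _
    simpa using this
  have h2 : -(x - cabs z) ≤ cabs (x - z) := by
    have : cabs z ≤ cabs (z - x) + cabs x := by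
      have e : z = (z - x) + x := by abel
      calc cabs z = cabs ((z - x) + x) := by rw [← e]
        _ ≤ cabs (z - x) + cabs x := cabs_add_le _ _
    rw [cabs_of_nonneg x hx] at this
    have e2 : cabs (z - x) = cabs (x - z) := by
      rw [← cabs_neg'' (z - x), neg_sub]
    rw [e2] at this
    have h3 : cabs z - x ≤ (cabs (x - z) + x) - x := sub_le_sub_right this _
    have e3 : (cabs (x - z) + x) - x = cabs (x - z) := by abel
    rw [e3] at h3
    simpa [neg_sub] using h3
  have hle : cabs (x - cabs z) ≤ cabs (x - z) := cabs_le' hd h1 h2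
  exact norm_mono _ _ hle

end Aux

/-- Proposition 4.6: for `x, y ≥ 0` in a Banach lattice, `x` lies in the closure of the
principal ideal `E_y` if and only if `‖(y - sx)⁻‖ = o(s)` as `s ↓ 0`. -/
theorem closure_of_principal_ideal
    {E : Type*} [ComplexBanachLattice E] (x y : E) (hx : 0 ≤ x) (hy : 0 ≤ y) :
    x ∈ closure {z : E | ∃ c : ℝ, 0 < c ∧ cabs z ≤ (c : ℂ) • y} ↔
    (fun s : ℝ => ‖negPart (y - (s : ℂ) • x)‖) =o[𝓝[>] (0 : ℝ)] (fun s : ℝ => s) := by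
  have hxr : conj x = x := conj_of_nonneg x hx
  have hyr : conj y = y := conj_of_nonneg y hy
  have hreal : ∀ t : ℝ, conj (x - ((t : ℝ) : ℂ) • y) = x - ((t : ℝ) : ℂ) • y := by
    intro t
    rw [conj_sub'', hxr, conj_real_smul t hyr]
  -- key identity: for s > 0, ‖(y - s x)⁻‖ = s * ‖(x - s⁻¹ y)⁺‖
  have key : ∀ s : ℝ, 0 < s →
      ‖negPart (y - (s : ℂ) • x)‖ = s * ‖posPart' (x - ((s⁻¹ : ℝ) : ℂ) • y)‖ := by
    intro s hs
    have e : -(y - (s : ℂ) • x) = ((s : ℝ) : ℂ) • (x - ((s⁻¹ : ℝ) : ℂ) • y) := by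
      rw [smul_sub, smul_smul, ← Complex.ofReal_mul, mul_inv_cancel₀ hs.ne',
        Complex.ofReal_one, one_smul, neg_sub]
    rw [negPart_eq_posPart'_neg, e, posPart'_smul hs.le, norm_smul, Complex.norm_real,
      Real.norm_eq_abs, abs_of_pos hs]
  constructor
  · -- closure → little-o
    intro hcl
    rw [Metric.mem_closure_iff] at hcl
    rw [isLittleO_iff]
    intro ε hε
    obtain ⟨z, hzS, hdist⟩ := hcl ε hε
    obtain ⟨c, hc, hzy⟩ := hzS
    set w : E := cabs z with hw
    have hw0 : 0 ≤ w := cabs_nonneg z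
    have hwr : conj w = w := conj_of_nonneg w hw0
    have hxwr : conj (x - w) = x - w := by rw [conj_sub'', hxr, hwr]
    have hxw : ‖x - w‖ < ε := by
      have := norm_sub_cabs_le (z := z) hx
      rw [dist_eq_norm] at hdist
      exact lt_of_le_of_lt this hdist
    -- bound the positive part uniformly for t ≥ c
    have bound : ∀ t : ℝ, c ≤ t → ‖posPart' (x - ((t : ℝ) : ℂ) • y)‖ ≤ ‖x - w‖ := by
      intro t ht
      have hwty : w - ((t : ℝ) : ℂ) • y ≤ 0 := by
        have h1 : ((c : ℝ) : ℂ) • y ≤ ((t : ℝ) : ℂ) • y := by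
          have h2 : (0 : E) ≤ (((t - c : ℝ)) : ℂ) • y :=
            smul_nonneg' (t - c) y (by linarith) hy
          have e : (((t - c : ℝ)) : ℂ) • y = ((t : ℝ) : ℂ) • y - ((c : ℝ) : ℂ) • y := by
            rw [Complex.ofReal_sub, sub_smul]
          rw [e] at h2
          exact sub_nonneg.1 h2
        have := hzy.trans h1
        exact sub_nonpos.2 this
      have hwtyr : conj (w - ((t : ℝ) : ℂ) • y) = w - ((t : ℝ) : ℂ) • y := by
        rw [conj_sub'', hwr, conj_real_smul t hyr]
      have hsplit : posPart' (x - ((t : ℝ) : ℂ) • y) ≤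
          posPart' (x - w) + posPart' (w - ((t : ℝ) : ℂ) • y) := by
        have := posPart'_add_le (x - w) (w - ((t : ℝ) : ℂ) • y)
        have e : (x - w) + (w - ((t : ℝ) : ℂ) • y) = x - ((t : ℝ) : ℂ) • y := by abel
        rwa [e] at this
      rw [posPart'_of_nonpos hwtyr hwty, add_zero] at hsplit
      have h2 : posPart' (x - w) ≤ cabs (x - w) :=
        posPart'_le hxwr (le_cabs' hxwr) (cabs_nonneg _)
      have h3 : posPart' (x - ((t : ℝ) : ℂ) • y) ≤ cabs (x - w) := hsplit.trans h2
      exact norm_le_of_cabs_le (posPart'_nonneg (hreal t)) h3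
    -- eventually, for small s, s⁻¹ ≥ c
    have hb : 0 < max c 1 := lt_of_lt_of_le one_pos (le_max_right _ _)
    filter_upwards [Ioo_mem_nhdsGT_of_mem (Set.left_mem_Ico.2 (inv_pos.2 hb))] with s hs
    have hs0 : 0 < s := hs.1
    have hcs : c ≤ s⁻¹ := by
      have h1 : max c 1 ≤ s⁻¹ := by
        rw [← inv_inv (max c 1)]
        exact inv_anti₀ hs0 hs.2.le
      exact (le_max_left c 1).trans h1
    rw [key s hs0]
    have := bound s⁻¹ hcs
    have hbnd : s * ‖posPart' (x - ((s⁻¹ : ℝ) : ℂ) • y)‖ ≤ s * ε := by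
      apply mul_le_mul_of_nonneg_left _ hs0.le
      exact this.trans hxw.le
    calc ‖s * ‖posPart' (x - ((s⁻¹ : ℝ) : ℂ) • y)‖‖
        = s * ‖posPart' (x - ((s⁻¹ : ℝ) : ℂ) • y)‖ := by
          rw [Real.norm_eq_abs, abs_of_nonneg (by positivity)]
      _ ≤ s * ε := hbnd
      _ = ε * ‖s‖ := by rw [Real.norm_eq_abs, abs_of_pos hs0]; ring
  · -- little-o → closure
    intro ho
    rw [Metric.mem_closure_iff]
    intro ε hε
    rw [isLittleO_iff] at ho
    have h2 := ho (show (0:ℝ) < ε / 2 by linarith)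
    obtain ⟨s, hs1, hs2⟩ := (h2.and eventually_mem_nhdsWithin).exists
    have hs0 : 0 < s := hs2
    set t : ℝ := s⁻¹ with htdef
    have ht0 : 0 < t := inv_pos.2 hs0
    have hPt : ‖posPart' (x - ((t : ℝ) : ℂ) • y)‖ < ε := by
      rw [key s hs0] at hs1
      rw [Real.norm_eq_abs, abs_of_nonneg (by positivity), Real.norm_eq_abs,
        abs_of_pos hs0] at hs1
      have := (mul_le_mul_iff_right₀ hs0).1 (by linarith [hs1] : s * ‖posPart' (x - ((s⁻¹ : ℝ) : ℂ) • y)‖ ≤ s * (ε / 2))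
      calc ‖posPart' (x - ((t : ℝ) : ℂ) • y)‖ ≤ ε / 2 := this
        _ < ε := by linarith
    set u : E := x - ((t : ℝ) : ℂ) • y with hu
    have hur : conj u = u := hreal t
    set m : E := x - posPart' u with hm
    have hty : (0 : E) ≤ ((t : ℝ) : ℂ) • y := smul_nonneg' t y ht0.le hy
    have hm0 : 0 ≤ m := by
      have : posPart' u ≤ x := by
        apply posPart'_le hur _ hx
        calc u = x - ((t : ℝ) : ℂ) • y := rfl
          _ ≤ x := by
            have := sub_le_sub_left hty x
            simpa using sub_le_self x hty
      exact sub_nonneg.2 this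
    have hmty : m ≤ ((t : ℝ) : ℂ) • y := by
      have h := le_posPart' hur
      -- x - t y ≤ (x - t y)⁺  →  x - (x - t y)⁺ ≤ t y
      have := sub_le_sub_left h x
      calc m = x - posPart' u := rfl
        _ ≤ x - u := sub_le_sub_left h x
        _ = ((t : ℝ) : ℂ) • y := by rw [hu]; abel
    refine ⟨m, ⟨t, ht0, ?_⟩, ?_⟩
    · rw [cabs_of_nonneg m hm0]
      exact hmty
    · rw [dist_eq_norm]
      have e : x - m = posPart' u := by rw [hm]; abel
      rw [e]
      exact hPt
end
end

section
/- Let E be a complex Banach lattice and let T be a positive, irreducible bounded linear operator on E with spectral radius r(T) = 1. Assume that the peripheral point spectrum of T is non-empty and that T is (WS)-bounded. Then: (a) for every x ∈ E with x > 0 one has T^k x ↛ 0 as k → ∞; and (b) whenever z ∈ ker(λ − T) for a peripheral eigenvalue λ of T, then |z| ∈ ker(1 − T), i.e. T|z| = |z|. -/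
open Filter Topology Asymptotics

noncomputable section

open ComplexBanachLattice

/-- A closed ideal of a complex Banach lattice: a closed (complex) vector subspace
which is solid with respect to the modulus. -/
def IsClosedIdeal {E : Type*} [ComplexBanachLattice E] (I : Set E) : Prop :=
  IsClosed I ∧ (0 : E) ∈ I ∧
  (∀ x ∈ I, ∀ y ∈ I, x + y ∈ I) ∧
  (∀ (c : ℂ), ∀ x ∈ I, c • x ∈ I) ∧
  (∀ x ∈ I, ∀ y : E, cabs y ≤ cabs x → y ∈ I)

/-- `T` is (WS)-bounded: there is a weighting scheme `(f_j)_{j ∈ J}` (described via the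
coefficients `a j : ℕ → ℝ` of the power series expansions `f_j(z) = ∑ₖ a_{j,k} zᵏ`, which are
nonnegative, sum to `1`, are summable against some radius `ρ_j > 1` — i.e. `f_j` is analytic
on a neighbourhood of the closed unit disc — and tend to `0` coefficientwise along the
directed index set `J`) such that the net `f_j(T) = ∑ₖ a_{j,k} Tᵏ` (given by the analytic
functional calculus) is bounded in operator norm. -/
def IsWSBounded {E : Type*} [ComplexBanachLattice E] (T : E →L[ℂ] E) : Prop :=
  ∃ (J : Type) (p : Preorder J),
    Nonempty J ∧
    (∀ i j : J, ∃ k : J, @LE.le J p.toLE i k ∧ @LE.le J p.toLE j k) ∧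
    ∃ (a : J → ℕ → ℝ) (fT : J → E →L[ℂ] E),
      (∀ j k, 0 ≤ a j k) ∧
      (∀ j, HasSum (fun k => a j k) 1) ∧
      (∀ j, ∃ ρ : ℝ, 1 < ρ ∧ Summable (fun k => a j k * ρ ^ k)) ∧
      (∀ k : ℕ, Filter.Tendsto (fun j => a j k) (@Filter.atTop J p) (𝓝 0)) ∧
      (∀ j, HasSum (fun k : ℕ => ((a j k : ℂ)) • T ^ k) (fT j)) ∧
      (∃ C : ℝ, ∀ j, ‖fT j‖ ≤ C)

/-- A positive operator is irreducible if its only closed invariant ideals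
are `{0}` and `E`. -/
def IsIrreducibleOp {E : Type*} [ComplexBanachLattice E] (T : E →L[ℂ] E) : Prop :=
  ∀ I : Set E, IsClosedIdeal I → (∀ x ∈ I, T x ∈ I) → I = {0} ∨ I = Set.univ

namespace CBLaux
variable {E : Type*} [ComplexBanachLattice E]
instance covAdd : CovariantClass E E (· + ·) (· ≤ ·) :=
  ⟨fun c a b h => ComplexBanachLattice.add_le_add_left' a b h c⟩
instance covAddSwap : CovariantClass E E (Function.swap (· + ·)) (· ≤ ·) :=
  ⟨fun c a b h => by
    simpa [Function.swap, add_comm] using ComplexBanachLattice.add_le_add_left' a b h c⟩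
instance ordClosed : OrderClosedTopology E := by
  constructor
  have h : {p : E × E | p.1 ≤ p.2} = (fun p : E × E => p.2 - p.1) ⁻¹' {x : E | 0 ≤ x} := by
    ext p; simp [sub_nonneg]
  rw [h]
  exact (ComplexBanachLattice.isClosed_nonneg).preimage (continuous_snd.sub continuous_fst)

lemma coe_smul (r : ℝ) (x : E) : (r : ℂ) • x = r • x := by
  rw [← Complex.coe_algebraMap, algebraMap_smul]
lemma smul_nonneg_real {r : ℝ} {x : E} (hr : 0 ≤ r) (hx : 0 ≤ x) : 0 ≤ r • x := by
  have := ComplexBanachLattice.smul_nonneg' r x hr hx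
  rwa [coe_smul] at this
lemma smul_le_smul_real {r : ℝ} {x y : E} (hr : 0 ≤ r) (h : x ≤ y) : r • x ≤ r • y := by
  have h0 : 0 ≤ y - x := sub_nonneg.2 h
  have := smul_nonneg_real hr h0
  rw [smul_sub] at this
  exact sub_nonneg.1 this
def IsReal (x : E) : Prop := ComplexBanachLattice.conj x = x
lemma conj_zero : ComplexBanachLattice.conj (0 : E) = 0 := by
  have := ComplexBanachLattice.conj_smul (0 : ℂ) (0 : E); simpa using this
lemma conj_neg (x : E) : ComplexBanachLattice.conj (-x) = -(ComplexBanachLattice.conj x) := by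
  have := ComplexBanachLattice.conj_smul (-1 : ℂ) x; simpa using this
lemma conj_sub (x y : E) :
    ComplexBanachLattice.conj (x - y)
      = ComplexBanachLattice.conj x - ComplexBanachLattice.conj y := by
  rw [sub_eq_add_neg, ComplexBanachLattice.conj_add, conj_neg, sub_eq_add_neg]
lemma conj_real_smul (r : ℝ) (x : E) :
    ComplexBanachLattice.conj (r • x) = r • ComplexBanachLattice.conj x := by
  rw [← coe_smul, ComplexBanachLattice.conj_smul, Complex.conj_ofReal, coe_smul]
lemma IsReal.add {x y : E} (hx : IsReal x) (hy : IsReal y) : IsReal (x + y) := by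
  unfold IsReal at *; rw [ComplexBanachLattice.conj_add, hx, hy]
lemma IsReal.neg {x : E} (hx : IsReal x) : IsReal (-x) := by
  unfold IsReal at *; rw [conj_neg, hx]
lemma IsReal.sub {x y : E} (hx : IsReal x) (hy : IsReal y) : IsReal (x - y) := by
  unfold IsReal at *; rw [conj_sub, hx, hy]
lemma IsReal.smul {x : E} (r : ℝ) (hx : IsReal x) : IsReal (r • x) := by
  unfold IsReal at *; rw [conj_real_smul, hx]
lemma IsReal.of_nonneg {x : E} (hx : 0 ≤ x) : IsReal x :=
  ComplexBanachLattice.conj_of_nonneg x hx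
lemma isReal_zero : IsReal (0 : E) := conj_zero
lemma IsReal.cabs (x : E) : IsReal (ComplexBanachLattice.cabs x) :=
  IsReal.of_nonneg (ComplexBanachLattice.cabs_nonneg x)
lemma cabs_neg (x : E) :
    ComplexBanachLattice.cabs (-x) = ComplexBanachLattice.cabs x := by
  have := ComplexBanachLattice.cabs_smul (-1 : ℂ) x; simpa using this
lemma cabs_real_smul (r : ℝ) (x : E) (hr : 0 ≤ r) :
    ComplexBanachLattice.cabs (r • x) = r • ComplexBanachLattice.cabs x := by
  rw [← coe_smul, ComplexBanachLattice.cabs_smul]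
  simp [Complex.norm_real, Real.norm_eq_abs, abs_of_nonneg hr, coe_smul]
lemma cabs_zero : ComplexBanachLattice.cabs (0 : E) = 0 :=
  (ComplexBanachLattice.cabs_eq_zero_iff 0).2 rfl
lemma le_cabs_self {x : E} (hx : IsReal x) : x ≤ ComplexBanachLattice.cabs x :=
  (ComplexBanachLattice.cabs_isLUB x hx).1 (by simp)
lemma neg_le_cabs_self {x : E} (hx : IsReal x) : -x ≤ ComplexBanachLattice.cabs x :=
  (ComplexBanachLattice.cabs_isLUB x hx).1 (by simp)
lemma cabs_le_iff {x v : E} (hx : IsReal x) :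
    ComplexBanachLattice.cabs x ≤ v ↔ x ≤ v ∧ -x ≤ v := by
  constructor
  · intro h
    exact ⟨le_trans (le_cabs_self hx) h, le_trans (neg_le_cabs_self hx) h⟩
  · rintro ⟨h1, h2⟩
    refine (ComplexBanachLattice.cabs_isLUB x hx).2 ?_
    intro w hw
    rcases hw with h | h
    · subst h; exact h1
    · simp only [Set.mem_singleton_iff] at h; subst h; exact h2
lemma cabs_sub_comm (x y : E) :
    ComplexBanachLattice.cabs (x - y) = ComplexBanachLattice.cabs (y - x) := by
  rw [← cabs_neg, neg_sub]

/-! ### sup2 / inf2 -/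

def sup2 (x y : E) : E := (2⁻¹ : ℝ) • (x + y + ComplexBanachLattice.cabs (y - x))
def inf2 (x y : E) : E := (2⁻¹ : ℝ) • (x + y - ComplexBanachLattice.cabs (y - x))

lemma half_double (x : E) : (2⁻¹ : ℝ) • (x + x) = x := by
  rw [← two_smul ℝ x, smul_smul]; norm_num

lemma sup2_add_inf2 (x y : E) : sup2 x y + inf2 x y = x + y := by
  unfold sup2 inf2
  rw [← smul_add]
  have : x + y + ComplexBanachLattice.cabs (y - x) + (x + y - ComplexBanachLattice.cabs (y - x))
      = (x + y) + (x + y) := by abel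
  rw [this, half_double]

lemma inf2_eq (x y : E) : inf2 x y = x + y - sup2 x y := by
  have := sup2_add_inf2 x y
  linear_combination (norm := abel1) this

lemma sup2_comm (x y : E) : sup2 x y = sup2 y x := by
  unfold sup2; rw [cabs_sub_comm, add_comm x y]

lemma inf2_comm (x y : E) : inf2 x y = inf2 y x := by
  unfold inf2; rw [cabs_sub_comm, add_comm x y]

lemma sup2_self (x : E) : sup2 x x = x := by
  unfold sup2; rw [sub_self, cabs_zero, add_zero, half_double]

lemma sup2_add_const (c x y : E) : sup2 (c + x) (c + y) = c + sup2 x y := by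
  unfold sup2
  have h1 : c + y - (c + x) = y - x := by abel
  rw [h1]
  have h2 : c + x + (c + y) + ComplexBanachLattice.cabs (y - x)
      = (c + c) + (x + y + ComplexBanachLattice.cabs (y - x)) := by abel
  rw [h2, smul_add, half_double]

lemma sup2_smul {r : ℝ} (hr : 0 ≤ r) (x y : E) : sup2 (r • x) (r • y) = r • sup2 x y := by
  unfold sup2
  rw [← smul_sub, cabs_real_smul _ _ hr, ← smul_add, ← smul_add, smul_comm]

lemma le_sup2_left {x y : E} (hx : IsReal x) (hy : IsReal y) : x ≤ sup2 x y := by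
  have h1 : x - y ≤ ComplexBanachLattice.cabs (y - x) := by
    have := neg_le_cabs_self (x := y - x) (hy.sub hx); rwa [neg_sub] at this
  have h2 : x + x ≤ x + y + ComplexBanachLattice.cabs (y - x) := by
    have := add_le_add_right h1 (x + y)
    calc x + x = x + y + (x - y) := by abel
    _ ≤ x + y + ComplexBanachLattice.cabs (y - x) := this
  calc x = (2⁻¹ : ℝ) • (x + x) := (half_double x).symm
  _ ≤ sup2 x y := smul_le_smul_real (by norm_num) h2

lemma le_sup2_right {x y : E} (hx : IsReal x) (hy : IsReal y) : y ≤ sup2 x y := by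
  rw [sup2_comm]; exact le_sup2_left hy hx

lemma sup2_le {x y v : E} (hx : IsReal x) (hy : IsReal y)
    (h1 : x ≤ v) (h2 : y ≤ v) : sup2 x y ≤ v := by
  have hc : ComplexBanachLattice.cabs (y - x) ≤ v + v - x - y := by
    rw [cabs_le_iff (hy.sub hx)]
    constructor
    · have h2' : y + y ≤ v + v := add_le_add h2 h2
      calc y - x = y + y - (x + y) := by abel
      _ ≤ v + v - (x + y) := sub_le_sub_right h2' (x + y)
      _ = v + v - x - y := by abel
    · have h1' : x + x ≤ v + v := add_le_add h1 h1
      calc -(y - x) = x + x - (x + y) := by abel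
      _ ≤ v + v - (x + y) := sub_le_sub_right h1' (x + y)
      _ = v + v - x - y := by abel
  have h3 : x + y + ComplexBanachLattice.cabs (y - x) ≤ v + v := by
    have := add_le_add_right hc (x + y)
    calc x + y + ComplexBanachLattice.cabs (y - x) ≤ x + y + (v + v - x - y) := this
    _ = v + v := by abel
  calc sup2 x y ≤ (2⁻¹ : ℝ) • (v + v) := smul_le_smul_real (by norm_num) h3
  _ = v := half_double v

end CBLaux

namespace CBLaux
variable {E : Type*} [ComplexBanachLattice E]

lemma IsReal.sup2' {x y : E} (hx : IsReal x) (hy : IsReal y) : IsReal (sup2 x y) :=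
  IsReal.smul _ ((hx.add hy).add (IsReal.cabs _))

lemma IsReal.inf2' {x y : E} (hx : IsReal x) (hy : IsReal y) : IsReal (inf2 x y) :=
  IsReal.smul _ ((hx.add hy).sub (IsReal.cabs _))

lemma inf2_le_left {x y : E} (hx : IsReal x) (hy : IsReal y) : inf2 x y ≤ x := by
  rw [inf2_eq]
  have h := le_sup2_right hx hy
  calc x + y - sup2 x y ≤ x + y - y := sub_le_sub_left h _
  _ = x := by abel

lemma inf2_le_right {x y : E} (hx : IsReal x) (hy : IsReal y) : inf2 x y ≤ y := by
  rw [inf2_comm]; exact inf2_le_left hy hx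

lemma le_inf2 {x y z : E} (hx : IsReal x) (hy : IsReal y)
    (h1 : z ≤ x) (h2 : z ≤ y) : z ≤ inf2 x y := by
  rw [inf2_eq]
  have hs : sup2 x y ≤ x + y - z := by
    refine sup2_le hx hy ?_ ?_
    · calc x = x + y - y := by abel
      _ ≤ x + y - z := sub_le_sub_left h2 _
    · calc y = x + y - x := by abel
      _ ≤ x + y - z := sub_le_sub_left h1 _
  calc z = x + y - (x + y - z) := by abel
  _ ≤ x + y - sup2 x y := sub_le_sub_left hs _

lemma sup2_mono {a b a' b' : E} (ha' : IsReal a') (hb' : IsReal b')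
    (ha : IsReal a) (hb : IsReal b)
    (h1 : a ≤ a') (h2 : b ≤ b') : sup2 a b ≤ sup2 a' b' :=
  sup2_le ha hb (le_trans h1 (le_sup2_left ha' hb')) (le_trans h2 (le_sup2_right ha' hb'))

lemma inf2_mono {a b a' b' : E} (ha : IsReal a) (hb : IsReal b)
    (ha' : IsReal a') (hb' : IsReal b')
    (h1 : a ≤ a') (h2 : b ≤ b') : inf2 a b ≤ inf2 a' b' :=
  le_inf2 ha' hb' (le_trans (inf2_le_left ha hb) h1) (le_trans (inf2_le_right ha hb) h2)

lemma inf2_eq_left {x s : E} (h : x ≤ s) : inf2 x s = x := by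
  unfold inf2
  rw [ComplexBanachLattice.cabs_of_nonneg _ (sub_nonneg.2 h)]
  have : x + s - (s - x) = x + x := by abel
  rw [this, half_double]

lemma inf2_add_const (c x y : E) : inf2 (c + x) (c + y) = c + inf2 x y := by
  unfold inf2
  have h1 : c + y - (c + x) = y - x := by abel
  rw [h1]
  have h2 : c + x + (c + y) - ComplexBanachLattice.cabs (y - x)
      = (c + c) + (x + y - ComplexBanachLattice.cabs (y - x)) := by abel
  rw [h2, smul_add, half_double]

/-- key distributivity inequality -/
lemma le_sup2_inf2 {x a b : E} (hx : IsReal x) (ha : IsReal a) (hb : IsReal b)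
    (h : x ≤ sup2 a b) : x ≤ sup2 (inf2 x a) (inf2 x b) := by
  set s := sup2 x (sup2 a b) with hs
  have hab : IsReal (sup2 a b) := ha.sup2' hb
  have hss : IsReal s := hx.sup2' hab
  have hxa : sup2 x a ≤ s :=
    sup2_le hx ha (le_sup2_left hx hab)
      (le_trans (le_sup2_left ha hb) (le_sup2_right hx hab))
  have hxb : sup2 x b ≤ s :=
    sup2_le hx hb (le_sup2_left hx hab)
      (le_trans (le_sup2_right ha hb) (le_sup2_right hx hab))
  have key : x + sup2 a b - s ≤ sup2 (inf2 x a) (inf2 x b) := by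
    have e1 : inf2 x a = x + a - sup2 x a := inf2_eq x a
    have e2 : inf2 x b = x + b - sup2 x b := inf2_eq x b
    have l1 : (x - s) + a ≤ inf2 x a := by
      rw [e1]
      calc (x - s) + a = x + a - s := by abel
      _ ≤ x + a - sup2 x a := sub_le_sub_left hxa _
    have l2 : (x - s) + b ≤ inf2 x b := by
      rw [e2]
      calc (x - s) + b = x + b - s := by abel
      _ ≤ x + b - sup2 x b := sub_le_sub_left hxb _
    calc x + sup2 a b - s = (x - s) + sup2 a b := by abel
    _ = sup2 ((x - s) + a) ((x - s) + b) := (sup2_add_const _ _ _).symm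
    _ ≤ sup2 (inf2 x a) (inf2 x b) := by
        refine sup2_mono (hx.inf2' ha) (hx.inf2' hb)
          (((hx.sub hss)).add ha) ((hx.sub hss).add hb) l1 l2
  have hxval : x + sup2 a b - s = inf2 x (sup2 a b) := by
    rw [inf2_eq]
  have : inf2 x (sup2 a b) = x := inf2_eq_left h
  calc x = x + sup2 a b - s := by rw [hxval, this]
  _ ≤ _ := key

end CBLaux

namespace CBLaux
variable {E : Type*} [ComplexBanachLattice E]

section Tlem
variable {T : E →L[ℂ] E}

lemma Tmono (hT : ∀ x : E, 0 ≤ x → 0 ≤ T x) {x y : E} (h : x ≤ y) : T x ≤ T y := by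
  have := hT _ (sub_nonneg.2 h)
  rw [map_sub] at this
  exact sub_nonneg.1 this

lemma TIsReal (hT : ∀ x : E, 0 ≤ x → 0 ≤ T x) {x : E} (hx : IsReal x) : IsReal (T x) := by
  have h0 : IsReal (0 : E) := isReal_zero
  set p := sup2 x 0 with hp
  have hp0 : 0 ≤ p := le_sup2_right hx h0
  have hpx : 0 ≤ p - x := sub_nonneg.2 (le_sup2_left hx h0)
  have h1 : ComplexBanachLattice.conj (T p) = T p :=
    ComplexBanachLattice.conj_of_nonneg _ (hT _ hp0)
  have h2 : ComplexBanachLattice.conj (T (p - x)) = T (p - x) :=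
    ComplexBanachLattice.conj_of_nonneg _ (hT _ hpx)
  have hx_eq : T x = T p - T (p - x) := by
    rw [← map_sub]; congr 1; abel
  unfold IsReal
  rw [hx_eq, conj_sub, h1, h2]

lemma conj_T_comm (hT : ∀ x : E, 0 ≤ x → 0 ≤ T x) (y : E) :
    ComplexBanachLattice.conj (T y) = T (ComplexBanachLattice.conj y) := by
  set p := (2⁻¹ : ℝ) • (y + ComplexBanachLattice.conj y) with hpdef
  set q := (2⁻¹ : ℝ) • ((-Complex.I) • y
      + ComplexBanachLattice.conj ((-Complex.I) • y)) with hqdef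
  have hpreal : IsReal p := by
    unfold IsReal
    rw [conj_real_smul, ComplexBanachLattice.conj_add, ComplexBanachLattice.conj_conj,
      add_comm (ComplexBanachLattice.conj y)]
  have hqreal : IsReal q := by
    unfold IsReal
    rw [conj_real_smul, ComplexBanachLattice.conj_add, ComplexBanachLattice.conj_conj,
      add_comm (ComplexBanachLattice.conj ((-Complex.I) • y))]
  have hqval : q = (2⁻¹ : ℝ) • ((-Complex.I) • y + Complex.I • ComplexBanachLattice.conj y) := by
    rw [hqdef, ComplexBanachLattice.conj_smul]
    congr 3
    simp
  have e1 : Complex.I • ((-Complex.I) • y + Complex.I • ComplexBanachLattice.conj y)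
      = y - ComplexBanachLattice.conj y := by
    rw [smul_add, smul_smul, smul_smul]
    simp [mul_neg, Complex.I_mul_I, sub_eq_add_neg]
  have hyeq : y = p + Complex.I • q := by
    rw [hpdef, hqval, smul_comm (Complex.I) ((2⁻¹ : ℝ)), e1, ← smul_add]
    have : y + ComplexBanachLattice.conj y + (y - ComplexBanachLattice.conj y) = y + y := by
      abel
    rw [this, half_double]
  have hconjy : ComplexBanachLattice.conj y = p - Complex.I • q := by
    rw [hpdef, hqval, smul_comm (Complex.I) ((2⁻¹ : ℝ)), e1, ← smul_sub]
    have : y + ComplexBanachLattice.conj y - (y - ComplexBanachLattice.conj y)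
        = ComplexBanachLattice.conj y + ComplexBanachLattice.conj y := by abel
    rw [this, half_double]
  have hTp : ComplexBanachLattice.conj (T p) = T p := TIsReal hT hpreal
  have hTq : ComplexBanachLattice.conj (T q) = T q := TIsReal hT hqreal
  have hTy : T y = T p + Complex.I • T q := by
    conv_lhs => rw [hyeq]
    rw [map_add, ContinuousLinearMap.map_smul]
  rw [hTy, ComplexBanachLattice.conj_add, ComplexBanachLattice.conj_smul, hTp, hTq,
    Complex.conj_I, hconjy, map_sub, ContinuousLinearMap.map_smul, neg_smul]
  abel

lemma cabs_T_le_real (hT : ∀ x : E, 0 ≤ x → 0 ≤ T x) {x : E} (hx : IsReal x) :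
    ComplexBanachLattice.cabs (T x) ≤ T (ComplexBanachLattice.cabs x) := by
  rw [cabs_le_iff (TIsReal hT hx)]
  constructor
  · exact Tmono hT (le_cabs_self hx)
  · rw [← map_neg]
    exact Tmono hT (neg_le_cabs_self hx)

end Tlem

/-! ### real-part vectors attached to an eigenvector -/

/-- `wv z c = Re (c • z)` -/
def wv (z : E) (c : ℂ) : E :=
  (2⁻¹ : ℝ) • (c • z + ComplexBanachLattice.conj (c • z))

/-- `mv z c = |Re (c • z)|` -/
def mv (z : E) (c : ℂ) : E := ComplexBanachLattice.cabs (wv z c)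

lemma wv_isReal (z : E) (c : ℂ) : IsReal (wv z c) := by
  unfold wv IsReal
  rw [conj_real_smul, ComplexBanachLattice.conj_add, ComplexBanachLattice.conj_conj,
    add_comm (ComplexBanachLattice.conj (c • z))]

lemma mv_isReal (z : E) (c : ℂ) : IsReal (mv z c) := IsReal.cabs _

lemma mv_nonneg (z : E) (c : ℂ) : 0 ≤ mv z c := ComplexBanachLattice.cabs_nonneg _

lemma wv_add (z : E) (c c' : ℂ) : wv z (c + c') = wv z c + wv z c' := by
  unfold wv
  rw [add_smul, ComplexBanachLattice.conj_add, ← smul_add]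
  congr 1
  abel

lemma wv_sub (z : E) (c c' : ℂ) : wv z (c - c') = wv z c - wv z c' := by
  unfold wv
  rw [sub_smul, conj_sub, ← smul_sub]
  congr 1
  abel

lemma wv_zero (z : E) : wv z 0 = 0 := by
  unfold wv; simp [conj_zero]

lemma wv_neg (z : E) (c : ℂ) : wv z (-c) = - wv z c := by
  have := wv_sub z 0 c
  simpa [wv_zero] using this

lemma wv_real_mul (z : E) (r : ℝ) (c : ℂ) : wv z ((r : ℂ) * c) = r • wv z c := by
  unfold wv
  rw [mul_smul, coe_smul, conj_real_smul, ← smul_add, smul_comm]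

lemma mv_neg (z : E) (c : ℂ) : mv z (-c) = mv z c := by
  unfold mv; rw [wv_neg, cabs_neg]

lemma mv_real_mul (z : E) {r : ℝ} (hr : 0 ≤ r) (c : ℂ) :
    mv z ((r : ℂ) * c) = r • mv z c := by
  unfold mv
  rw [wv_real_mul, cabs_real_smul _ _ hr]

end CBLaux

namespace CBLaux
variable {E : Type*} [ComplexBanachLattice E]

/-- `|x| + |y| = |x+y| ⊔ |x−y|` for conj-real `x,y`. -/
lemma cabs_add_cabs {x y : E} (hx : IsReal x) (hy : IsReal y) :
    ComplexBanachLattice.cabs x + ComplexBanachLattice.cabs y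
      = sup2 (ComplexBanachLattice.cabs (x + y)) (ComplexBanachLattice.cabs (x - y)) := by
  set S := sup2 (ComplexBanachLattice.cabs (x + y)) (ComplexBanachLattice.cabs (x - y)) with hS
  have hSC1 : IsReal (ComplexBanachLattice.cabs (x + y)) := IsReal.cabs _
  have hSC2 : IsReal (ComplexBanachLattice.cabs (x - y)) := IsReal.cabs _
  apply le_antisymm
  · -- |x| + |y| ≤ S
    have h1 : x + y ≤ S :=
      le_trans (le_cabs_self (hx.add hy)) (le_sup2_left hSC1 hSC2)
    have h2 : -(x + y) ≤ S :=
      le_trans (neg_le_cabs_self (hx.add hy)) (le_sup2_left hSC1 hSC2)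
    have h3 : x - y ≤ S :=
      le_trans (le_cabs_self (hx.sub hy)) (le_sup2_right hSC1 hSC2)
    have h4 : -(x - y) ≤ S :=
      le_trans (neg_le_cabs_self (hx.sub hy)) (le_sup2_right hSC1 hSC2)
    have hy' : ComplexBanachLattice.cabs y ≤ S - x := by
      rw [cabs_le_iff hy]
      refine ⟨?_, ?_⟩
      · rw [le_sub_iff_add_le, add_comm]; exact h1
      · rw [le_sub_iff_add_le]
        have e : -y + x = -(y - x) := by abel
        rw [e, neg_sub]
        exact h3
    have hy'' : ComplexBanachLattice.cabs y ≤ S + x := by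
      rw [cabs_le_iff hy]
      refine ⟨?_, ?_⟩
      · rw [← sub_le_iff_le_add]
        have e : y - x = -(x - y) := by abel
        rw [e]; exact h4
      · rw [← sub_le_iff_le_add]
        have e : -y - x = -(x + y) := by abel
        rw [e]; exact h2
    have hx' : ComplexBanachLattice.cabs x ≤ S - ComplexBanachLattice.cabs y := by
      rw [cabs_le_iff hx]
      refine ⟨?_, ?_⟩
      · rw [le_sub_iff_add_le, add_comm, ← le_sub_iff_add_le]; exact hy'
      · rw [le_sub_iff_add_le, add_comm, ← le_sub_iff_add_le, sub_neg_eq_add]; exact hy''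
    rw [← le_sub_iff_add_le]; exact hx'
  · refine sup2_le hSC1 hSC2 (ComplexBanachLattice.cabs_add_le x y) ?_
    rw [sub_eq_add_neg]
    calc ComplexBanachLattice.cabs (x + -y)
        ≤ ComplexBanachLattice.cabs x + ComplexBanachLattice.cabs (-y) :=
          ComplexBanachLattice.cabs_add_le x (-y)
    _ = ComplexBanachLattice.cabs x + ComplexBanachLattice.cabs y := by rw [cabs_neg]

end CBLaux

namespace CBLaux
variable {E : Type*} [ComplexBanachLattice E]

lemma mv_add_mv (z : E) (c c' : ℂ) :
    mv z c + mv z c' = sup2 (mv z (c + c')) (mv z (c - c')) := by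
  unfold mv
  rw [wv_add, wv_sub]
  exact cabs_add_cabs (wv_isReal z c) (wv_isReal z c')

lemma cabs_smul_abs {c : ℂ} (hc : ‖c‖ = 1) (z : E) :
    ComplexBanachLattice.cabs (c • z) = ComplexBanachLattice.cabs z := by
  rw [ComplexBanachLattice.cabs_smul, hc]
  norm_num

lemma wv_smul (z : E) (c d : ℂ) : wv (c • z) d = wv z (d * c) := by
  unfold wv
  rw [smul_smul]

lemma self_eq_wv (v : E) : v = wv v 1 + (-Complex.I) • wv v Complex.I := by
  have h1 : wv v 1 = (2⁻¹ : ℝ) • (v + ComplexBanachLattice.conj v) := by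
    unfold wv; rw [one_smul]
  have h2 : wv v Complex.I = (2⁻¹ : ℝ) • (Complex.I • v
      - Complex.I • ComplexBanachLattice.conj v) := by
    unfold wv
    rw [ComplexBanachLattice.conj_smul, Complex.conj_I, neg_smul, ← sub_eq_add_neg]
  have e : (-Complex.I) • (Complex.I • v - Complex.I • ComplexBanachLattice.conj v)
      = v - ComplexBanachLattice.conj v := by
    rw [smul_sub, smul_smul, smul_smul, neg_mul, Complex.I_mul_I, neg_neg, one_smul, one_smul]
  rw [h1, h2, smul_comm ((-Complex.I)) ((2⁻¹ : ℝ)), e, ← smul_add]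
  have : v + ComplexBanachLattice.conj v + (v - ComplexBanachLattice.conj v) = v + v := by
    abel
  rw [this, half_double]

lemma cabs_le_mv_add (z : E) (c : ℂ) :
    ComplexBanachLattice.cabs (c • z) ≤ mv z c + mv z (Complex.I * c) := by
  have h := self_eq_wv (c • z)
  have e1 : wv (c • z) 1 = wv z c := by rw [wv_smul, one_mul]
  have e2 : wv (c • z) Complex.I = wv z (Complex.I * c) := by rw [wv_smul]
  calc ComplexBanachLattice.cabs (c • z)
      = ComplexBanachLattice.cabs (wv z c + (-Complex.I) • wv z (Complex.I * c)) := by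
        rw [← e1, ← e2, ← h]
  _ ≤ ComplexBanachLattice.cabs (wv z c)
      + ComplexBanachLattice.cabs ((-Complex.I) • wv z (Complex.I * c)) :=
        ComplexBanachLattice.cabs_add_le _ _
  _ = mv z c + mv z (Complex.I * c) := by
        unfold mv
        rw [ComplexBanachLattice.cabs_smul]
        norm_num

lemma u_le_mv_pair {c : ℂ} (hc : ‖c‖ = 1) (z : E) :
    ComplexBanachLattice.cabs z ≤ mv z c + mv z (Complex.I * c) := by
  rw [← cabs_smul_abs hc z]
  exact cabs_le_mv_add z c

lemma mv_le_u {c : ℂ} (hc : ‖c‖ = 1) (z : E) :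
    mv z c ≤ ComplexBanachLattice.cabs z := by
  unfold mv wv
  rw [cabs_real_smul _ _ (by norm_num : (0:ℝ) ≤ 2⁻¹)]
  have h1 : ComplexBanachLattice.cabs (c • z + ComplexBanachLattice.conj (c • z))
      ≤ ComplexBanachLattice.cabs z + ComplexBanachLattice.cabs z := by
    calc ComplexBanachLattice.cabs (c • z + ComplexBanachLattice.conj (c • z))
        ≤ ComplexBanachLattice.cabs (c • z)
          + ComplexBanachLattice.cabs (ComplexBanachLattice.conj (c • z)) :=
          ComplexBanachLattice.cabs_add_le _ _
    _ = ComplexBanachLattice.cabs z + ComplexBanachLattice.cabs z := by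
        rw [ComplexBanachLattice.cabs_conj, cabs_smul_abs hc]
  calc (2⁻¹ : ℝ) • ComplexBanachLattice.cabs (c • z + ComplexBanachLattice.conj (c • z))
      ≤ (2⁻¹ : ℝ) • (ComplexBanachLattice.cabs z + ComplexBanachLattice.cabs z) :=
        smul_le_smul_real (by norm_num) h1
  _ = ComplexBanachLattice.cabs z := half_double _

section eigenrot
variable {T : E →L[ℂ] E} {μ : ℂ} {z : E}

lemma T_wv (hT : ∀ x : E, 0 ≤ x → 0 ≤ T x) (hz : T z = μ • z) (c : ℂ) :
    T (wv z c) = wv z (c * μ) := by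
  unfold wv
  rw [T.map_smul_of_tower, map_add, ← conj_T_comm hT, ContinuousLinearMap.map_smul, hz,
    smul_smul]

lemma mv_rot_le (hT : ∀ x : E, 0 ≤ x → 0 ≤ T x) (hz : T z = μ • z)
    (hμ : ‖μ‖ = 1) (c : ℂ) :
    mv z c ≤ T (mv z (c * starRingEnd ℂ μ)) := by
  have hcm : (c * starRingEnd ℂ μ) * μ = c := by
    rw [mul_assoc]
    have : starRingEnd ℂ μ * μ = 1 := by
      rw [mul_comm, Complex.mul_conj]
      rw [Complex.normSq_eq_norm_sq, hμ]
      norm_num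
    rw [this, mul_one]
  have h1 : T (wv z (c * starRingEnd ℂ μ)) = wv z c := by
    rw [T_wv hT hz, hcm]
  unfold mv
  rw [← h1]
  exact cabs_T_le_real hT (wv_isReal _ _)

lemma mv_unit_le_Tu (hT : ∀ x : E, 0 ≤ x → 0 ≤ T x) (hz : T z = μ • z)
    (hμ : ‖μ‖ = 1) {c : ℂ} (hc : ‖c‖ = 1) :
    mv z c ≤ T (ComplexBanachLattice.cabs z) := by
  refine le_trans (mv_rot_le hT hz hμ c) (Tmono hT ?_)
  refine mv_le_u ?_ z
  rw [norm_mul, Complex.norm_conj, hc, hμ, one_mul]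

lemma mv_le_abs_Tu (hT : ∀ x : E, 0 ≤ x → 0 ≤ T x) (hz : T z = μ • z)
    (hμ : ‖μ‖ = 1) (c : ℂ) :
    mv z c ≤ (‖c‖) • T (ComplexBanachLattice.cabs z) := by
  by_cases hc : c = 0
  · subst hc
    unfold mv
    rw [wv_zero, cabs_zero]
    simp
  · set r : ℝ := ‖c‖ with hr
    have hrpos : 0 < r := by
      rw [hr]; exact norm_pos_iff.mpr hc
    set e : ℂ := ((r⁻¹ : ℝ) : ℂ) * c with he
    have hce : c = (r : ℂ) * e := by
      rw [he, ← mul_assoc, ← Complex.ofReal_mul, mul_inv_cancel₀ (ne_of_gt hrpos)]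
      simp
    have habse : ‖e‖ = 1 := by
      rw [he, norm_mul]
      simp [Complex.norm_real, Real.norm_eq_abs, abs_of_pos (inv_pos.2 hrpos), hr]
      rw [inv_mul_cancel₀ (ne_of_gt hrpos)]
    calc mv z c = mv z ((r : ℂ) * e) := by rw [← hce]
    _ = r • mv z e := mv_real_mul z (le_of_lt hrpos) e
    _ ≤ r • T (ComplexBanachLattice.cabs z) :=
        smul_le_smul_real (le_of_lt hrpos) (mv_unit_le_Tu hT hz hμ habse)

end eigenrot
end CBLaux

namespace CBLaux
variable {E : Type*} [ComplexBanachLattice E]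

lemma smul_le_smul_coeff {r s : ℝ} {x : E} (hx : 0 ≤ x) (hr : 0 ≤ r) (h : r ≤ s) :
    r • x ≤ s • x := by
  have h0 : 0 ≤ (s - r) • x := smul_nonneg_real (by linarith) hx
  rw [sub_smul] at h0
  exact sub_nonneg.1 h0

/-- One half of the lattice chain argument. -/
lemma half_chain (C D : ℕ → E) (x Y : E) (n : ℕ)
    (hC : ∀ k, IsReal (C k)) (hD : ∀ k, IsReal (D k)) (hx : IsReal x) (hY : IsReal Y)
    (hxM : ∀ k ≤ n, x ≤ sup2 (C k) (D k))
    (hCD : ∀ k < n, inf2 (C k) (D (k + 1)) ≤ Y)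
    (hCC : inf2 (C 0) (C n) ≤ Y) :
    inf2 x (C 0) ≤ Y := by
  set F : ℕ → E := fun k =>
    Nat.rec (inf2 x (C 0)) (fun k Fk => inf2 Fk (C (k + 1))) k with hF
  have hFsucc : ∀ k, F (k + 1) = inf2 (F k) (C (k + 1)) := fun k => rfl
  have hF0 : F 0 = inf2 x (C 0) := rfl
  have hFreal : ∀ k, IsReal (F k) := by
    intro k
    induction k with
    | zero => exact hx.inf2' (hC 0)
    | succ k ih => rw [hFsucc]; exact ih.inf2' (hC (k + 1))
  have hFx : ∀ k, F k ≤ x := by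
    intro k
    induction k with
    | zero => exact inf2_le_left hx (hC 0)
    | succ k ih =>
        rw [hFsucc]
        exact le_trans (inf2_le_left (hFreal k) (hC (k + 1))) ih
  have hFC : ∀ k, F k ≤ C k := by
    intro k
    cases k with
    | zero => exact inf2_le_right hx (hC 0)
    | succ k => rw [hFsucc]; exact inf2_le_right (hFreal k) (hC (k + 1))
  have hFmono : ∀ k, F k ≤ F 0 := by
    intro k
    induction k with
    | zero => exact le_rfl
    | succ k ih =>
        rw [hFsucc]
        exact le_trans (inf2_le_left (hFreal k) (hC (k + 1))) ih
  have hstep : ∀ k, k < n → F k ≤ sup2 (F (k + 1)) Y := by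
    intro k hk
    have h1 : F k ≤ sup2 (C (k + 1)) (D (k + 1)) :=
      le_trans (hFx k) (hxM (k + 1) (by omega))
    have h2 := le_sup2_inf2 (hFreal k) (hC (k + 1)) (hD (k + 1)) h1
    have h3 : inf2 (F k) (D (k + 1)) ≤ Y :=
      le_trans (inf2_mono (hFreal k) (hD (k + 1)) (hC k) (hD (k + 1)) (hFC k) le_rfl)
        (hCD k hk)
    refine le_trans h2 ?_
    rw [← hFsucc]
    exact sup2_mono (hFreal (k + 1)) hY (hFreal (k + 1)) ((hFreal k).inf2' (hD (k + 1)))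
      le_rfl h3
  have hunroll : ∀ j, j ≤ n → F 0 ≤ sup2 (F j) Y := by
    intro j
    induction j with
    | zero => exact fun _ => le_sup2_left (hFreal 0) hY
    | succ j ih =>
        intro hj
        have h1 : F 0 ≤ sup2 (F j) Y := ih (by omega)
        have h2 : F j ≤ sup2 (F (j + 1)) Y := hstep j (by omega)
        have h3 : sup2 (F j) Y ≤ sup2 (sup2 (F (j + 1)) Y) Y :=
          sup2_mono ((hFreal (j + 1)).sup2' hY) hY (hFreal j) hY h2 le_rfl
        have h4 : sup2 (sup2 (F (j + 1)) Y) Y ≤ sup2 (F (j + 1)) Y :=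
          sup2_le ((hFreal (j + 1)).sup2' hY) hY le_rfl (le_sup2_right (hFreal (j + 1)) hY)
        exact le_trans h1 (le_trans h3 h4)
  have hFn : F n ≤ Y := by
    refine le_trans (le_inf2 (hC 0) (hC n) ?_ (hFC n)) hCC
    exact le_trans (hFmono n) (hFC 0)
  have : F 0 ≤ sup2 Y Y :=
    le_trans (hunroll n le_rfl) (sup2_mono hY hY (hFreal n) hY hFn le_rfl)
  rw [sup2_self] at this
  exact le_trans (le_of_eq hF0.symm) this

/-- The full chain argument. -/
lemma chain_lemma (A B : ℕ → E) (x Y : E) (n : ℕ)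
    (hA : ∀ k, IsReal (A k)) (hB : ∀ k, IsReal (B k)) (hx : IsReal x) (hY : IsReal Y)
    (hxM : ∀ k ≤ n, x ≤ sup2 (A k) (B k))
    (hAB : ∀ k < n, inf2 (A k) (B (k + 1)) ≤ Y)
    (hBA : ∀ k < n, inf2 (B k) (A (k + 1)) ≤ Y)
    (hAA : inf2 (A 0) (A n) ≤ Y)
    (hBB : inf2 (B 0) (B n) ≤ Y) : x ≤ Y := by
  have hA0 : inf2 x (A 0) ≤ Y := half_chain A B x Y n hA hB hx hY hxM hAB hAA
  have hB0 : inf2 x (B 0) ≤ Y := by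
    refine half_chain B A x Y n hB hA hx hY ?_ hBA hBB
    intro k hk
    rw [sup2_comm]
    exact hxM k hk
  have h1 : x ≤ sup2 (inf2 x (A 0)) (inf2 x (B 0)) :=
    le_sup2_inf2 hx (hA 0) (hB 0) (hxM 0 (by omega))
  refine le_trans h1 ?_
  have := sup2_mono hY hY (hx.inf2' (hA 0)) (hx.inf2' (hB 0)) hA0 hB0
  rwa [sup2_self] at this

end CBLaux

namespace CBLaux
variable {E : Type*} [ComplexBanachLattice E]

lemma abs_one_add_le {x : ℂ} (hx : ‖x‖ = 1) {t : ℝ} (h : x.re ≤ t) :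
    ‖1 + x‖ ≤ Real.sqrt (2 + 2 * t) := by
  have hnx : Complex.normSq x = 1 := by
    have := Complex.sq_norm x
    rw [hx] at this
    simpa using this.symm
  have h1 : Complex.normSq (1 + x) = 2 + 2 * x.re := by
    rw [Complex.normSq_add, hnx]
    simp [Complex.normSq_one]
    ring
  rw [Complex.norm_def, h1]
  exact Real.sqrt_le_sqrt (by linarith)

lemma abs_one_sub_le {x : ℂ} (hx : ‖x‖ = 1) {t : ℝ} (h : -x.re ≤ t) :
    ‖1 - x‖ ≤ Real.sqrt (2 + 2 * t) := by
  rw [sub_eq_add_neg]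
  exact abs_one_add_le (by simpa using hx) (by simpa using h)

section crux
variable {T : E →L[ℂ] E} {μ : ℂ} {z : E}

lemma inf2_mv_le (hT : ∀ x : E, 0 ≤ x → 0 ≤ T x) (hz : T z = μ • z)
    (hμ : ‖μ‖ = 1) {c c' : ℂ} {S : ℝ}
    (h1 : ‖c + c'‖ ≤ S) (h2 : ‖c - c'‖ ≤ S) :
    inf2 (mv z c) (mv z c') ≤ (2⁻¹ * S) • T (ComplexBanachLattice.cabs z) := by
  have hTu : 0 ≤ T (ComplexBanachLattice.cabs z) :=
    hT _ (ComplexBanachLattice.cabs_nonneg z)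
  have hm1 : mv z (c + c') ≤ S • T (ComplexBanachLattice.cabs z) :=
    le_trans (mv_le_abs_Tu hT hz hμ _)
      (smul_le_smul_coeff hTu (norm_nonneg _) h1)
  have hm2 : mv z (c - c') ≤ S • T (ComplexBanachLattice.cabs z) :=
    le_trans (mv_le_abs_Tu hT hz hμ _)
      (smul_le_smul_coeff hTu (norm_nonneg _) h2)
  have hsup : sup2 (mv z (c + c')) (mv z (c - c'))
      ≤ S • T (ComplexBanachLattice.cabs z) :=
    sup2_le (mv_isReal _ _) (mv_isReal _ _) hm1 hm2
  have hhalf : inf2 (mv z c) (mv z c') ≤ (2⁻¹ : ℝ) • (mv z c + mv z c') := by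
    have hadd : inf2 (mv z c) (mv z c') + inf2 (mv z c) (mv z c') ≤ mv z c + mv z c' :=
      add_le_add (inf2_le_left (mv_isReal _ _) (mv_isReal _ _))
        (inf2_le_right (mv_isReal _ _) (mv_isReal _ _))
    calc inf2 (mv z c) (mv z c')
        = (2⁻¹ : ℝ) • (inf2 (mv z c) (mv z c') + inf2 (mv z c) (mv z c')) :=
          (half_double _).symm
    _ ≤ (2⁻¹ : ℝ) • (mv z c + mv z c') := smul_le_smul_real (by norm_num) hadd
  calc inf2 (mv z c) (mv z c') ≤ (2⁻¹ : ℝ) • (mv z c + mv z c') := hhalf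
  _ = (2⁻¹ : ℝ) • sup2 (mv z (c + c')) (mv z (c - c')) := by rw [mv_add_mv]
  _ ≤ (2⁻¹ : ℝ) • (S • T (ComplexBanachLattice.cabs z)) :=
      smul_le_smul_real (by norm_num) hsup
  _ = (2⁻¹ * S) • T (ComplexBanachLattice.cabs z) := by rw [smul_smul]

lemma u_le_coeff_Tu (hT : ∀ x : E, 0 ≤ x → 0 ≤ T x) (hz : T z = μ • z)
    (hμ : ‖μ‖ = 1) (K : ℕ) (hK : 2 ≤ K) :
    ComplexBanachLattice.cabs z
      ≤ (2⁻¹ * (Real.sqrt 2 * Real.sqrt (2 + 2 * Real.sin (Real.pi / (2 * K)))))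
          • T (ComplexBanachLattice.cabs z) := by
  set Δ : ℝ := Real.pi / (2 * K) with hΔ
  have hKpos : (0:ℝ) < K := by positivity
  have hΔpos : 0 < Δ := by
    rw [hΔ]; positivity
  have hΔle : Δ ≤ Real.pi := by
    rw [hΔ]
    refine div_le_self Real.pi_pos.le ?_
    have : (2:ℝ) ≤ (K:ℝ) := by exact_mod_cast hK
    linarith
  have hsin : 0 ≤ Real.sin Δ := Real.sin_nonneg_of_nonneg_of_le_pi (le_of_lt hΔpos) hΔle
  set ω : ℂ := Complex.exp ((Δ : ℂ) * Complex.I) with hω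
  have habsω : ‖ω‖ = 1 := Complex.norm_exp_ofReal_mul_I Δ
  have hωre : ω.re = Real.cos Δ := by rw [hω]; exact Complex.exp_ofReal_mul_I_re Δ
  have hωim : ω.im = Real.sin Δ := by rw [hω]; exact Complex.exp_ofReal_mul_I_im Δ
  have hIωre : (Complex.I * ω).re = - Real.sin Δ := by
    rw [Complex.mul_re]
    simp [hωim]
  have habsIω : ‖Complex.I * ω‖ = 1 := by
    rw [norm_mul, Complex.norm_I, one_mul, habsω]
  -- the end of the grid
  have hωpow : (ω ^ (K - 1)).re = Real.sin Δ := by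
    have hcast : ((K - 1 : ℕ) : ℂ) * ((Δ : ℂ) * Complex.I) = (↑((K - 1 : ℕ) * Δ) : ℂ) * Complex.I := by
      push_cast
      ring
    have h1 : ω ^ (K - 1) = Complex.exp ((↑(((K - 1 : ℕ)) * Δ) : ℂ) * Complex.I) := by
      rw [hω, ← Complex.exp_nat_mul, hcast]
    have h2 : ((K - 1 : ℕ) : ℝ) * Δ = Real.pi / 2 - Δ := by
      have : ((K - 1 : ℕ) : ℝ) = (K : ℝ) - 1 := by
        have : (1:ℕ) ≤ K := by omega
        push_cast [Nat.cast_sub this]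
        ring
      rw [this, hΔ]
      field_simp
    rw [h1, Complex.exp_ofReal_mul_I_re, h2, Real.cos_pi_div_two_sub]
  have habsωpow : ‖ω ^ (K - 1)‖ = 1 := by
    rw [norm_pow, habsω, one_pow]
  set s : ℝ := Real.sqrt (2 + 2 * Real.sin Δ) with hs
  have hs_nonneg : 0 ≤ s := Real.sqrt_nonneg _
  set S2 : ℝ := Real.sqrt 2 * s with hS2
  have habs1mI : ‖1 - Complex.I‖ = Real.sqrt 2 := by
    rw [Complex.norm_def]
    congr 1
    simp [Complex.normSq_apply]
    norm_num
  -- bounds of the form  |(1-I) * w * (1 ± v)| ≤ S2  for |w| = 1, |v| = 1, |v.re| ≤ sin Δ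
  have key_bound : ∀ (w v : ℂ), ‖w‖ = 1 → ‖v‖ = 1 →
      |v.re| ≤ Real.sin Δ → ‖(1 - Complex.I) * w * (1 + v)‖ ≤ S2 := by
    intro w v hw hv hvre
    rw [norm_mul, norm_mul, habs1mI, hw, mul_one, hS2]
    refine mul_le_mul_of_nonneg_left ?_ (Real.sqrt_nonneg 2)
    exact abs_one_add_le hv (le_trans (le_abs_self _) hvre)
  -- grid data
  set cgrid : ℕ → ℂ := fun k => (1 - Complex.I) * ω ^ k with hcgrid
  set A : ℕ → E := fun k => mv z (cgrid k) with hA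
  set B : ℕ → E := fun k => mv z (Complex.I * cgrid k) with hB
  set u : E := ComplexBanachLattice.cabs z with hu
  set Y : E := (2⁻¹ * S2) • T u with hY
  have hAreal : ∀ k, IsReal (A k) := fun k => mv_isReal _ _
  have hBreal : ∀ k, IsReal (B k) := fun k => mv_isReal _ _
  have hureal : IsReal u := IsReal.cabs _
  have hYreal : IsReal Y := IsReal.smul _ (TIsReal hT hureal)
  -- x ≤ sup2 (A k) (B k)
  have hxM : ∀ k, u ≤ sup2 (A k) (B k) := by
    intro k
    have habsk : ‖ω ^ k‖ = 1 := by rw [norm_pow, habsω, one_pow]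
    have h0 : u ≤ mv z (ω ^ k) + mv z (Complex.I * ω ^ k) := u_le_mv_pair habsk z
    rw [mv_add_mv] at h0
    have e1 : ω ^ k + Complex.I * ω ^ k = Complex.I * cgrid k := by
      rw [hcgrid]
      have : Complex.I * ((1 - Complex.I) * ω ^ k)
          = (Complex.I - Complex.I * Complex.I) * ω ^ k := by ring
      rw [this, Complex.I_mul_I]
      ring
    have e2 : ω ^ k - Complex.I * ω ^ k = cgrid k := by
      rw [hcgrid]; ring
    rw [e1, e2] at h0
    calc u ≤ sup2 (mv z (Complex.I * cgrid k)) (mv z (cgrid k)) := h0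
    _ = sup2 (A k) (B k) := by rw [sup2_comm, hA, hB]
  -- pair bounds
  have habsneg : ∀ x : ℂ, ‖-x‖ = ‖x‖ := fun x => norm_neg x
  have hvIω : |(Complex.I * ω).re| ≤ Real.sin Δ := by
    rw [hIωre, abs_neg, abs_of_nonneg hsin]
  have hvnIω : |(-(Complex.I * ω)).re| ≤ Real.sin Δ := by
    rw [Complex.neg_re, hIωre, neg_neg, abs_of_nonneg hsin]
  have hvpow : |(ω ^ (K - 1)).re| ≤ Real.sin Δ := by
    rw [hωpow, abs_of_nonneg hsin]
  have hvnpow : |(-(ω ^ (K - 1))).re| ≤ Real.sin Δ := by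
    rw [Complex.neg_re, hωpow, abs_neg, abs_of_nonneg hsin]
  have habsnIω : ‖-(Complex.I * ω)‖ = 1 := by rw [habsneg, habsIω]
  have habsnpow : ‖-(ω ^ (K - 1))‖ = 1 := by rw [habsneg, habsωpow]
  have habskI : ∀ k : ℕ, ‖ω ^ k * Complex.I‖ = 1 := by
    intro k
    rw [norm_mul, norm_pow, habsω, one_pow, Complex.norm_I, mul_one]
  have hAB : ∀ k, inf2 (A k) (B (k + 1)) ≤ Y := by
    intro k
    refine inf2_mv_le hT hz hμ (S := S2) ?_ ?_
    · have e : cgrid k + Complex.I * cgrid (k + 1)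
          = (1 - Complex.I) * ω ^ k * (1 + Complex.I * ω) := by
        simp only [hcgrid]; rw [pow_succ]; ring
      rw [e]
      exact key_bound _ _ (by rw [norm_pow, habsω, one_pow]) habsIω hvIω
    · have e : cgrid k - Complex.I * cgrid (k + 1)
          = (1 - Complex.I) * ω ^ k * (1 + -(Complex.I * ω)) := by
        simp only [hcgrid]; rw [pow_succ]; ring
      rw [e]
      exact key_bound _ _ (by rw [norm_pow, habsω, one_pow]) habsnIω hvnIω
  have hBA : ∀ k, inf2 (B k) (A (k + 1)) ≤ Y := by
    intro k
    refine inf2_mv_le hT hz hμ (S := S2) ?_ ?_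
    · have e : Complex.I * cgrid k + cgrid (k + 1)
          = (1 - Complex.I) * (ω ^ k * Complex.I) * (1 + -(Complex.I * ω)) := by
        simp only [hcgrid]
        rw [pow_succ]
        linear_combination ((1 - Complex.I) * ω ^ k * ω) * Complex.I_sq
      rw [e]
      exact key_bound _ _ (habskI k) habsnIω hvnIω
    · have e : Complex.I * cgrid k - cgrid (k + 1)
          = (1 - Complex.I) * (ω ^ k * Complex.I) * (1 + Complex.I * ω) := by
        simp only [hcgrid]
        rw [pow_succ]
        linear_combination (-((1 - Complex.I) * ω ^ k * ω)) * Complex.I_sq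
      rw [e]
      exact key_bound _ _ (habskI k) habsIω hvIω
  have hAA : inf2 (A 0) (A (K - 1)) ≤ Y := by
    refine inf2_mv_le hT hz hμ (S := S2) ?_ ?_
    · have e : cgrid 0 + cgrid (K - 1)
          = (1 - Complex.I) * 1 * (1 + ω ^ (K - 1)) := by
        simp only [hcgrid]; rw [pow_zero]; ring
      rw [e]
      exact key_bound _ _ norm_one habsωpow hvpow
    · have e : cgrid 0 - cgrid (K - 1)
          = (1 - Complex.I) * 1 * (1 + -(ω ^ (K - 1))) := by
        simp only [hcgrid]; rw [pow_zero]; ring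
      rw [e]
      exact key_bound _ _ norm_one habsnpow hvnpow
  have hBB : inf2 (B 0) (B (K - 1)) ≤ Y := by
    refine inf2_mv_le hT hz hμ (S := S2) ?_ ?_
    · have e : Complex.I * cgrid 0 + Complex.I * cgrid (K - 1)
          = (1 - Complex.I) * Complex.I * (1 + ω ^ (K - 1)) := by
        simp only [hcgrid]; rw [pow_zero]; ring
      rw [e]
      exact key_bound _ _ Complex.norm_I habsωpow hvpow
    · have e : Complex.I * cgrid 0 - Complex.I * cgrid (K - 1)
          = (1 - Complex.I) * Complex.I * (1 + -(ω ^ (K - 1))) := by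
        simp only [hcgrid]; rw [pow_zero]; ring
      rw [e]
      exact key_bound _ _ Complex.norm_I habsnpow hvnpow
  -- apply the chain lemma
  have := chain_lemma A B u Y (K - 1) hAreal hBreal hureal hYreal
    (fun k _ => hxM k) (fun k _ => hAB k) (fun k _ => hBA k) hAA hBB
  rw [hY, hS2, hs] at this
  exact this

lemma u_le_Tu (hT : ∀ x : E, 0 ≤ x → 0 ≤ T x) (hz : T z = μ • z)
    (hμ : ‖μ‖ = 1) :
    ComplexBanachLattice.cabs z ≤ T (ComplexBanachLattice.cabs z) := by
  set u : E := ComplexBanachLattice.cabs z with hu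
  set coeff : ℕ → ℝ := fun K =>
    2⁻¹ * (Real.sqrt 2 * Real.sqrt (2 + 2 * Real.sin (Real.pi / (2 * K)))) with hcoeff
  have hKey : ∀ K : ℕ, 2 ≤ K → u ≤ coeff K • T u := fun K hK =>
    u_le_coeff_Tu hT hz hμ K hK
  -- `coeff K → 1`
  have hlim0 : Tendsto (fun K : ℕ => Real.pi / (2 * (K : ℝ))) atTop (𝓝 0) := by
    have h1 : Tendsto (fun K : ℕ => (Real.pi / 2) * (1 / (K : ℝ))) atTop (𝓝 ((Real.pi / 2) * 0)) :=
      (tendsto_one_div_atTop_nhds_zero_nat).const_mul (Real.pi / 2)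
    rw [mul_zero] at h1
    refine h1.congr (fun K => ?_)
    rw [div_mul_div_comm, mul_one]
  have hlimsin : Tendsto (fun K : ℕ => Real.sin (Real.pi / (2 * (K : ℝ)))) atTop (𝓝 0) := by
    have := (Real.continuous_sin.tendsto 0).comp hlim0
    simpa [Function.comp_def] using this
  have hlimcoeff : Tendsto coeff atTop (𝓝 1) := by
    have h2 : Tendsto (fun K : ℕ => 2 + 2 * Real.sin (Real.pi / (2 * (K : ℝ)))) atTop
        (𝓝 2) := by
      have := (hlimsin.const_mul 2).const_add 2
      simpa using this
    have h3 : Tendsto (fun K : ℕ => Real.sqrt (2 + 2 * Real.sin (Real.pi / (2 * (K : ℝ)))))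
        atTop (𝓝 (Real.sqrt 2)) := (Real.continuous_sqrt.tendsto 2).comp h2
    have h4 := (h3.const_mul (Real.sqrt 2)).const_mul (2⁻¹ : ℝ)
    have h5 : (2⁻¹ : ℝ) * (Real.sqrt 2 * Real.sqrt 2) = 1 := by
      rw [Real.mul_self_sqrt (by norm_num : (0:ℝ) ≤ 2)]
      norm_num
    rw [h5] at h4
    exact h4
  have hlim : Tendsto (fun K : ℕ => coeff K • T u) atTop (𝓝 ((1 : ℝ) • T u)) :=
    hlimcoeff.smul_const (T u)
  rw [one_smul] at hlim
  exact ge_of_tendsto hlim (Filter.eventually_atTop.2 ⟨2, fun K hK => hKey K hK⟩)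

end crux
end CBLaux



namespace CBLaux
variable {E : Type*} [ComplexBanachLattice E]

lemma sum_nonneg' {ι : Type*} (s : Finset ι) (f : ι → E) (h : ∀ i, 0 ≤ f i) :
    0 ≤ ∑ i ∈ s, f i := by
  classical
  induction s using Finset.induction_on with
  | empty => simp
  | insert _ _ hnot ih =>
      rw [Finset.sum_insert hnot]
      exact add_nonneg (h _) ih

lemma hasSum_nonneg' {f : ℕ → E} {x : E} (hf : HasSum f x) (h : ∀ i, 0 ≤ f i) : 0 ≤ x :=
  ge_of_tendsto hf (Filter.Eventually.of_forall fun s => sum_nonneg' s f h)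

lemma hasSum_le' {f g : ℕ → E} {x y : E} (hf : HasSum f x) (hg : HasSum g y)
    (h : ∀ i, f i ≤ g i) : x ≤ y := by
  have h0 := hasSum_nonneg' (hg.sub hf) (fun i => sub_nonneg.2 (h i))
  exact sub_nonneg.1 h0

lemma pos_functional_mono {φ : E →L[ℝ] ℝ} (hφ : ∀ w : E, 0 ≤ w → 0 ≤ φ w) {a b : E}
    (h : a ≤ b) : φ a ≤ φ b := by
  have h0 := hφ _ (sub_nonneg.2 h)
  rw [map_sub] at h0
  linarith

lemma exists_pos_functional (x : E) (hx : 0 ≤ x) (hxne : x ≠ 0) :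
    ∃ φ : E →L[ℝ] ℝ, (∀ w : E, 0 ≤ w → 0 ≤ φ w) ∧ 0 < φ x := by
  set s : Set E := {w : E | w ≤ 0} with hs
  have hclosed : IsClosed s := by
    have h : s = (fun w : E => -w) ⁻¹' {w : E | 0 ≤ w} := by
      ext w; simp [hs, neg_nonneg]
    rw [h]
    exact (ComplexBanachLattice.isClosed_nonneg).preimage continuous_neg
  have hconvex : Convex ℝ s := by
    intro a ha b hb ta tb hta htb hsum
    have h1 : ta • a ≤ 0 := by
      have h0 : 0 ≤ ta • (-a) := smul_nonneg_real hta (by simpa [hs, neg_nonneg] using ha)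
      rw [smul_neg] at h0
      exact neg_nonneg.1 h0
    have h2 : tb • b ≤ 0 := by
      have h0 : 0 ≤ tb • (-b) := smul_nonneg_real htb (by simpa [hs, neg_nonneg] using hb)
      rw [smul_neg] at h0
      exact neg_nonneg.1 h0
    have : ta • a + tb • b ≤ 0 + 0 := add_le_add h1 h2
    simpa [hs] using this
  have hxs : x ∉ s := fun h => hxne (le_antisymm h hx)
  obtain ⟨f, c, hfs, hcx⟩ := geometric_hahn_banach_closed_point hconvex hclosed hxs
  have hc0 : 0 < c := by
    have := hfs 0 (by simp [hs])
    simpa using this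
  refine ⟨f, ?_, ?_⟩
  · intro w hw
    by_contra hneg
    push_neg at hneg
    have hfw : 0 < -(f w) := by linarith
    set r : ℝ := (c + 1) / (-(f w)) with hr
    have hrpos : 0 < r := by positivity
    have hmem : -(r • w) ∈ s := by
      have : 0 ≤ r • w := smul_nonneg_real hrpos.le hw
      simpa [hs, neg_nonpos] using this
    have hlt := hfs _ hmem
    rw [map_neg, map_smul] at hlt
    have heq : r * (-(f w)) = c + 1 := by
      rw [hr, div_mul_cancel₀]
      exact ne_of_gt hfw
    have : -(r • f w) = c + 1 := by
      rw [smul_eq_mul]; linarith [heq]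
    rw [this] at hlt
    linarith
  · linarith

lemma cabs_lipschitz (x y : E) :
    ‖ComplexBanachLattice.cabs x - ComplexBanachLattice.cabs y‖ ≤ ‖x - y‖ := by
  set d := ComplexBanachLattice.cabs x - ComplexBanachLattice.cabs y with hd
  have hdr : IsReal d := (IsReal.cabs x).sub (IsReal.cabs y)
  have h1 : d ≤ ComplexBanachLattice.cabs (x - y) := by
    have h0 := ComplexBanachLattice.cabs_add_le (x - y) y
    rw [sub_add_cancel] at h0
    rw [hd]
    exact sub_le_iff_le_add.2 h0
  have h2 : -d ≤ ComplexBanachLattice.cabs (x - y) := by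
    have h0 := ComplexBanachLattice.cabs_add_le (y - x) x
    rw [sub_add_cancel] at h0
    rw [hd, neg_sub, cabs_sub_comm x y]
    exact sub_le_iff_le_add.2 h0
  have h3 : ComplexBanachLattice.cabs d ≤ ComplexBanachLattice.cabs (x - y) :=
    (cabs_le_iff hdr).2 ⟨h1, h2⟩
  exact ComplexBanachLattice.norm_mono _ _ h3

lemma continuous_cabs : Continuous (ComplexBanachLattice.cabs : E → E) := by
  refine (LipschitzWith.of_dist_le_mul (K := 1) ?_).continuous
  intro x y
  rw [dist_eq_norm, dist_eq_norm]
  calc ‖ComplexBanachLattice.cabs x - ComplexBanachLattice.cabs y‖ ≤ ‖x - y‖ :=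
    cabs_lipschitz x y
  _ = (1 : NNReal) * ‖x - y‖ := by norm_num

section Tpow
variable {T : E →L[ℂ] E}

lemma Tpow_pos (hT : ∀ x : E, 0 ≤ x → 0 ≤ T x) (k : ℕ) {x : E} (hx : 0 ≤ x) :
    0 ≤ (T ^ k) x := by
  induction k with
  | zero => simpa using hx
  | succ k ih =>
      rw [pow_succ', ContinuousLinearMap.mul_apply]
      exact hT _ ih

lemma pow_apply_add (T : E →L[ℂ] E) (k i : ℕ) (v : E) :
    (T ^ (k + i)) v = (T ^ k) ((T ^ i) v) := by
  rw [pow_add, ContinuousLinearMap.mul_apply]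

lemma pow_apply_fixed {u : E} (hfix : T u = u) (k : ℕ) : (T ^ k) u = u := by
  induction k with
  | zero => simp
  | succ k ih =>
      rw [pow_succ', ContinuousLinearMap.mul_apply, ih, hfix]

end Tpow
end CBLaux


namespace CBLaux
variable {E : Type*} [ComplexBanachLattice E]

lemma ws_limit {J : Type} [Preorder J] {a : J → ℕ → ℝ}
    (ha0 : ∀ j k, 0 ≤ a j k) (ha1 : ∀ j, HasSum (a j) 1)
    (hatend : ∀ k : ℕ, Tendsto (fun j => a j k) atTop (𝓝 0))
    {g : ℕ → ℝ} (hg0 : ∀ t, 0 ≤ g t) {Bd : ℝ} (hgB : ∀ t, g t ≤ Bd)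
    (hglim : Tendsto g atTop (𝓝 0)) (i : ℕ) :
    Tendsto (fun j => ∑' k, a j k * g (k + i)) atTop (𝓝 0) := by
  have hBd0 : 0 ≤ Bd := le_trans (hg0 0) (hgB 0)
  rw [Metric.tendsto_nhds]
  intro ε hε
  obtain ⟨K₀, hK₀⟩ := (Metric.tendsto_atTop.1 hglim) (ε / 4) (by linarith)
  have hgK : ∀ t, K₀ ≤ t → g t ≤ ε / 4 := by
    intro t ht
    have h1 := hK₀ t ht
    rw [Real.dist_eq, sub_zero, abs_of_nonneg (hg0 t)] at h1
    linarith
  have hhead : Tendsto (fun j => ∑ k ∈ Finset.range K₀, a j k) atTop (𝓝 0) := by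
    have h0 := tendsto_finset_sum (Finset.range K₀)
      (fun k (_ : k ∈ Finset.range K₀) => hatend k)
    simpa using h0
  have hpos : (0:ℝ) < ε / (2 * (Bd + 1)) := by positivity
  have hev : ∀ᶠ j in (atTop : Filter J),
      ∑ k ∈ Finset.range K₀, a j k < ε / (2 * (Bd + 1)) :=
    hhead.eventually_lt_const hpos
  rw [Filter.eventually_iff_exists_mem] at hev ⊢
  obtain ⟨S, hSmem, hS⟩ := hev
  refine ⟨S, hSmem, ?_⟩
  intro j hj
  have hjS := hS j hj
  have hsummable : Summable (fun k => a j k * g (k + i)) := by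
    refine Summable.of_nonneg_of_le (fun k => mul_nonneg (ha0 j k) (hg0 _))
      (fun k => ?_) (((ha1 j).summable).mul_right Bd)
    exact mul_le_mul_of_nonneg_left (hgB _) (ha0 j k)
  have hF0 : 0 ≤ ∑' k, a j k * g (k + i) :=
    tsum_nonneg (fun k => mul_nonneg (ha0 j k) (hg0 _))
  rw [Real.dist_eq, sub_zero, abs_of_nonneg hF0]
  have hsplit := Summable.sum_add_tsum_nat_add (f := fun k => a j k * g (k + i)) K₀ hsummable
  -- head bound
  have hheadb : ∑ k ∈ Finset.range K₀, a j k * g (k + i) ≤ ε / 2 := by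
    have h1 : ∑ k ∈ Finset.range K₀, a j k * g (k + i)
        ≤ ∑ k ∈ Finset.range K₀, a j k * Bd :=
      Finset.sum_le_sum (fun k _ => mul_le_mul_of_nonneg_left (hgB _) (ha0 j k))
    have h2 : ∑ k ∈ Finset.range K₀, a j k * Bd
        = (∑ k ∈ Finset.range K₀, a j k) * Bd := by
      rw [Finset.sum_mul]
    have h3 : (∑ k ∈ Finset.range K₀, a j k) * Bd ≤ (ε / (2 * (Bd + 1))) * (Bd + 1) := by
      refine mul_le_mul hjS.le (by linarith) hBd0 (by positivity)
    have h4 : (ε / (2 * (Bd + 1))) * (Bd + 1) = ε / 2 := by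
      field_simp
    linarith
  -- tail bound
  have htail_sum_le_one : ∑' k, a j (k + K₀) ≤ 1 := by
    have hsp := Summable.sum_add_tsum_nat_add (f := a j) K₀ (ha1 j).summable
    rw [(ha1 j).tsum_eq] at hsp
    have hhead0 : 0 ≤ ∑ k ∈ Finset.range K₀, a j k :=
      Finset.sum_nonneg (fun k _ => ha0 j k)
    linarith
  have htailb : ∑' k, a j (k + K₀) * g (k + K₀ + i) ≤ ε / 4 := by
    have hsum1 : Summable (fun k => a j (k + K₀) * g (k + K₀ + i)) :=
      ((summable_nat_add_iff K₀).2 hsummable)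
    have hsum2 : Summable (fun k => a j (k + K₀) * (ε / 4)) :=
      ((summable_nat_add_iff K₀).2 (ha1 j).summable).mul_right _
    have h1 : ∑' k, a j (k + K₀) * g (k + K₀ + i) ≤ ∑' k, a j (k + K₀) * (ε / 4) := by
      refine hsum1.tsum_le_tsum (fun k => ?_) hsum2
      exact mul_le_mul_of_nonneg_left (hgK _ (by omega)) (ha0 j _)
    have h2 : ∑' k, a j (k + K₀) * (ε / 4) = (∑' k, a j (k + K₀)) * (ε / 4) :=
      tsum_mul_right
    have h3 : (∑' k, a j (k + K₀)) * (ε / 4) ≤ 1 * (ε / 4) :=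
      mul_le_mul_of_nonneg_right htail_sum_le_one (by linarith)
    rw [h2] at h1
    linarith
  have : ∑' k, a j k * g (k + i)
      = ∑ k ∈ Finset.range K₀, a j k * g (k + i)
        + ∑' k, a j (k + K₀) * g (k + K₀ + i) := by
    rw [← hsplit]
  rw [this]
  linarith

lemma exists_psi {J : Type} [Preorder J] (U : Ultrafilter J)
    (fT : J → E →L[ℂ] E) {C : ℝ} (hC : ∀ j, ‖fT j‖ ≤ C) (φ : E →L[ℝ] ℝ) :
    ∃ ψ : E →L[ℝ] ℝ, ∀ y : E,
      Tendsto (fun j => φ ((fT j) y)) (U : Filter J) (𝓝 (ψ y)) := by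
  have hbound : ∀ (y : E) (j : J), |φ ((fT j) y)| ≤ ‖φ‖ * (C * ‖y‖) := by
    intro y j
    have h1 : ‖φ ((fT j) y)‖ ≤ ‖φ‖ * ‖(fT j) y‖ := φ.le_opNorm _
    have h2 : ‖(fT j) y‖ ≤ ‖fT j‖ * ‖y‖ := (fT j).le_opNorm y
    have h3 : ‖fT j‖ * ‖y‖ ≤ C * ‖y‖ :=
      mul_le_mul_of_nonneg_right (hC j) (norm_nonneg y)
    rw [Real.norm_eq_abs] at h1
    calc |φ ((fT j) y)| ≤ ‖φ‖ * ‖(fT j) y‖ := h1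
    _ ≤ ‖φ‖ * (C * ‖y‖) :=
      mul_le_mul_of_nonneg_left (le_trans h2 h3) (norm_nonneg φ)
  have hex : ∀ y : E, ∃ L : ℝ,
      Tendsto (fun j => φ ((fT j) y)) (U : Filter J) (𝓝 L) := by
    intro y
    set R := ‖φ‖ * (C * ‖y‖) with hR
    have hcom : IsCompact (Set.Icc (-R) R) := isCompact_Icc
    have hmem : Set.Icc (-R) R ∈ Ultrafilter.map (fun j => φ ((fT j) y)) U := by
      refine Filter.mem_map.2 (Filter.univ_mem' (fun j => ?_))
      have h := hbound y j
      rw [abs_le] at h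
      exact ⟨h.1, h.2⟩
    obtain ⟨L, _, hle⟩ := hcom.ultrafilter_le_nhds _ (Filter.le_principal_iff.2 hmem)
    refine ⟨L, ?_⟩
    have : Ultrafilter.map (fun j => φ ((fT j) y)) U
        = (Ultrafilter.map (fun j => φ ((fT j) y)) U) := rfl
    rw [Tendsto]
    rwa [show (Filter.map (fun j => φ ((fT j) y)) (U : Filter J))
        = ((Ultrafilter.map (fun j => φ ((fT j) y)) U : Ultrafilter ℝ) : Filter ℝ) from rfl]
  choose ψ₀ hψ₀ using hex
  have hadd : ∀ y₁ y₂ : E, ψ₀ (y₁ + y₂) = ψ₀ y₁ + ψ₀ y₂ := by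
    intro y₁ y₂
    have h1 : Tendsto (fun j => φ ((fT j) y₁) + φ ((fT j) y₂)) (U : Filter J)
        (𝓝 (ψ₀ y₁ + ψ₀ y₂)) := (hψ₀ y₁).add (hψ₀ y₂)
    have h2 : Tendsto (fun j => φ ((fT j) (y₁ + y₂))) (U : Filter J)
        (𝓝 (ψ₀ y₁ + ψ₀ y₂)) := by
      refine h1.congr (fun j => ?_)
      rw [map_add, map_add]
    exact tendsto_nhds_unique (hψ₀ (y₁ + y₂)) h2
  have hsmul : ∀ (r : ℝ) (y : E), ψ₀ (r • y) = r * ψ₀ y := by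
    intro r y
    have h1 : Tendsto (fun j => r * φ ((fT j) y)) (U : Filter J)
        (𝓝 (r * ψ₀ y)) := (hψ₀ y).const_mul r
    have h2 : Tendsto (fun j => φ ((fT j) (r • y))) (U : Filter J)
        (𝓝 (r * ψ₀ y)) := by
      refine h1.congr (fun j => ?_)
      rw [(fT j).map_smul_of_tower, map_smul, smul_eq_mul]
    exact tendsto_nhds_unique (hψ₀ (r • y)) h2
  set ψl : E →ₗ[ℝ] ℝ :=
    { toFun := ψ₀, map_add' := hadd, map_smul' := hsmul } with hψl
  have hψb : ∀ y : E, ‖ψl y‖ ≤ (‖φ‖ * C) * ‖y‖ := by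
    intro y
    rw [Real.norm_eq_abs]
    have h1 : ψ₀ y ≤ ‖φ‖ * (C * ‖y‖) := by
      refine le_of_tendsto (hψ₀ y) (Filter.Eventually.of_forall (fun j => ?_))
      exact le_trans (le_abs_self _) (hbound y j)
    have h2 : -(‖φ‖ * (C * ‖y‖)) ≤ ψ₀ y := by
      refine ge_of_tendsto (hψ₀ y) (Filter.Eventually.of_forall (fun j => ?_))
      have := hbound y j
      rw [abs_le] at this
      exact this.1
    have : |ψ₀ y| ≤ ‖φ‖ * (C * ‖y‖) := abs_le.2 ⟨h2, h1⟩
    calc |ψl y| = |ψ₀ y| := rfl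
    _ ≤ ‖φ‖ * (C * ‖y‖) := this
    _ = (‖φ‖ * C) * ‖y‖ := by ring
  exact ⟨LinearMap.mkContinuous ψl (‖φ‖ * C) hψb, fun y => hψ₀ y⟩

end CBLaux


namespace CBLaux
variable {E : Type*} [ComplexBanachLattice E]

/-- The closed ideal dual to the orbit of `v`. -/
def dualIdeal (T : E →L[ℂ] E) (v : E) : Set E :=
  {y : E | ∀ φ : E →L[ℝ] ℝ, (∀ w : E, 0 ≤ w → 0 ≤ φ w) →
    (∀ i : ℕ, φ ((T ^ i) v) = 0) → φ (ComplexBanachLattice.cabs y) = 0}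

lemma dualIdeal_isClosedIdeal (T : E →L[ℂ] E) (v : E) :
    IsClosedIdeal (dualIdeal T v) := by
  refine ⟨?_, ?_, ?_, ?_, ?_⟩
  · have h : dualIdeal T v = ⋂ (φ : E →L[ℝ] ℝ) (_ : ∀ w : E, 0 ≤ w → 0 ≤ φ w)
        (_ : ∀ i : ℕ, φ ((T ^ i) v) = 0),
          {y : E | φ (ComplexBanachLattice.cabs y) = 0} := by
      ext y
      simp only [dualIdeal, Set.mem_setOf_eq, Set.mem_iInter]
    rw [h]
    refine isClosed_iInter (fun φ => isClosed_iInter (fun _ => isClosed_iInter (fun _ => ?_)))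
    exact isClosed_eq (φ.continuous.comp continuous_cabs) continuous_const
  · intro φ _ _
    rw [cabs_zero, map_zero]
  · intro x hx y hy φ hφ hkill
    have h1 : φ (ComplexBanachLattice.cabs (x + y))
        ≤ φ (ComplexBanachLattice.cabs x) + φ (ComplexBanachLattice.cabs y) := by
      have h0 := pos_functional_mono hφ (ComplexBanachLattice.cabs_add_le x y)
      rwa [map_add] at h0
    have h2 : 0 ≤ φ (ComplexBanachLattice.cabs (x + y)) :=
      hφ _ (ComplexBanachLattice.cabs_nonneg _)
    rw [hx φ hφ hkill, hy φ hφ hkill] at h1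
    linarith
  · intro c x hx φ hφ hkill
    rw [ComplexBanachLattice.cabs_smul, coe_smul, map_smul, smul_eq_mul, hx φ hφ hkill,
      mul_zero]
  · intro x hx y hle φ hφ hkill
    have h1 := pos_functional_mono hφ hle
    have h2 : 0 ≤ φ (ComplexBanachLattice.cabs y) :=
      hφ _ (ComplexBanachLattice.cabs_nonneg _)
    rw [hx φ hφ hkill] at h1
    linarith

lemma dualIdeal_Tinv {T : E →L[ℂ] E} (hT : ∀ x : E, 0 ≤ x → 0 ≤ T x) (v : E) :
    ∀ y ∈ dualIdeal T v, T y ∈ dualIdeal T v := by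
  intro y hy φ hφ hkill
  set φT : E →L[ℝ] ℝ := φ.comp (T.restrictScalars ℝ) with hφT
  have hφT_apply : ∀ w, φT w = φ (T w) := fun w => rfl
  have hφTpos : ∀ w : E, 0 ≤ w → 0 ≤ φT w := fun w hw => hφ _ (hT _ hw)
  have hφTkill : ∀ i : ℕ, φT ((T ^ i) v) = 0 := by
    intro i
    rw [hφT_apply]
    have h0 : T ((T ^ i) v) = (T ^ (i + 1)) v := by
      rw [pow_succ', ContinuousLinearMap.mul_apply]
    rw [h0]
    exact hkill (i + 1)
  have hyT := hy φT hφTpos hφTkill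
  rw [hφT_apply] at hyT
  -- decomposition bound
  have he : T y = T (wv y 1) + (-Complex.I) • T (wv y Complex.I) := by
    conv_lhs => rw [self_eq_wv y]
    rw [map_add, ContinuousLinearMap.map_smul]
  have hdec : ComplexBanachLattice.cabs (T y) ≤ T (mv y 1) + T (mv y Complex.I) := by
    calc ComplexBanachLattice.cabs (T y)
        = ComplexBanachLattice.cabs (T (wv y 1) + (-Complex.I) • T (wv y Complex.I)) := by
          rw [← he]
    _ ≤ ComplexBanachLattice.cabs (T (wv y 1))
        + ComplexBanachLattice.cabs ((-Complex.I) • T (wv y Complex.I)) :=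
        ComplexBanachLattice.cabs_add_le _ _
    _ = ComplexBanachLattice.cabs (T (wv y 1))
        + ComplexBanachLattice.cabs (T (wv y Complex.I)) := by
        rw [ComplexBanachLattice.cabs_smul]
        norm_num
    _ ≤ T (ComplexBanachLattice.cabs (wv y 1))
        + T (ComplexBanachLattice.cabs (wv y Complex.I)) :=
        add_le_add (cabs_T_le_real hT (wv_isReal y 1)) (cabs_T_le_real hT (wv_isReal y _))
    _ = T (mv y 1) + T (mv y Complex.I) := rfl
  have h1 : φ (ComplexBanachLattice.cabs (T y))
      ≤ φ (T (mv y 1)) + φ (T (mv y Complex.I)) := by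
    have h0 := pos_functional_mono hφ hdec
    rwa [map_add] at h0
  have h2 : φ (T (mv y 1)) ≤ φ (T (ComplexBanachLattice.cabs y)) :=
    pos_functional_mono hφ (Tmono hT (mv_le_u (by simp) y))
  have h3 : φ (T (mv y Complex.I)) ≤ φ (T (ComplexBanachLattice.cabs y)) :=
    pos_functional_mono hφ (Tmono hT (mv_le_u (by simp) y))
  have h4 : 0 ≤ φ (ComplexBanachLattice.cabs (T y)) :=
    hφ _ (ComplexBanachLattice.cabs_nonneg _)
  rw [hyT] at h2 h3
  linarith

end CBLaux

open CBLaux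

set_option maxHeartbeats 2000000

/-- Theorem 5.7(a),(b): let `T` be positive, irreducible and (WS)-bounded with `r(T) = 1`
and non-empty peripheral point spectrum. Then (a) `Tᵏx ↛ 0` for every `x > 0`, and
(b) whenever `Tz = λz` for a peripheral eigenvalue `λ`, then `T|z| = |z|`. -/
theorem irreducible_ws_bounded_a_b
    {E : Type*} [ComplexBanachLattice E] (T : E →L[ℂ] E)
    (hTpos : IsPosOp T)
    (hirr : IsIrreducibleOp T)
    (hrad : spectralRadius ℂ T = 1)
    (hpps : ∃ (μ : ℂ) (z : E), z ≠ 0 ∧ ‖μ‖ = 1 ∧ T z = μ • z)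
    (hws : IsWSBounded T) :
    (∀ x : E, 0 ≤ x → x ≠ 0 →
      ¬ Tendsto (fun k : ℕ => (T ^ k) x) atTop (𝓝 0)) ∧
    (∀ (μ : ℂ) (z : E), ‖μ‖ = 1 → z ≠ 0 → T z = μ • z →
      T (cabs z) = cabs z) := by
  classical
  obtain ⟨J, p, hne, hdir, a, fT, ha0, ha1, hrho, hatend, hfTsum, C, hC⟩ := hws
  letI : Preorder J := p
  haveI hne' : Nonempty J := hne
  haveI hdirected : IsDirected J (· ≤ ·) := ⟨hdir⟩
  haveI hNB : (atTop : Filter J).NeBot := Filter.atTop_neBot_iff.2 ⟨hne, hdirected⟩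
  set U : Ultrafilter J := Ultrafilter.of atTop with hUdef
  have hUle : (U : Filter J) ≤ atTop := Ultrafilter.of_le _
  -- applied sums
  have happly : ∀ (j : J) (w : E), HasSum (fun k => a j k • (T ^ k) w) ((fT j) w) := by
    intro j w
    have h0 : HasSum (fun k => ((a j k : ℂ) • T ^ k) w) ((fT j) w) :=
      (hfTsum j).mapL (ContinuousLinearMap.apply ℂ E w)
    have h1 : (fun k => ((a j k : ℂ) • T ^ k) w) = fun k => a j k • (T ^ k) w := by
      funext k
      rw [ContinuousLinearMap.smul_apply, coe_smul]
    rwa [h1] at h0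
  have hfTpos : ∀ (j : J) (w : E), 0 ≤ w → 0 ≤ (fT j) w := by
    intro j w hw
    exact hasSum_nonneg' (happly j w)
      (fun k => smul_nonneg_real (ha0 j k) (Tpow_pos hTpos k hw))
  -- part (b)
  have keyb : ∀ (μ : ℂ) (z : E), ‖μ‖ = 1 → z ≠ 0 → T z = μ • z →
      T (ComplexBanachLattice.cabs z) = ComplexBanachLattice.cabs z := by
    intro μ z hμ hzne heig
    set u : E := ComplexBanachLattice.cabs z with hu
    have hu0 : 0 ≤ u := ComplexBanachLattice.cabs_nonneg z
    have hune : u ≠ 0 := fun h => hzne ((ComplexBanachLattice.cabs_eq_zero_iff z).1 h)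
    have huTu : u ≤ T u := u_le_Tu hTpos heig hμ
    set v : E := T u - u with hv
    have hv0 : 0 ≤ v := sub_nonneg.2 huTu
    by_cases hvz : v = 0
    · rw [hv, sub_eq_zero] at hvz
      exact hvz
    exfalso
    have hmonotone : ∀ k : ℕ, u ≤ (T ^ k) u := by
      intro k
      induction k with
      | zero => simp
      | succ k ih =>
          rw [pow_succ', ContinuousLinearMap.mul_apply]
          exact le_trans huTu (Tmono hTpos ih)
    set su : ℕ → E := fun n => (T ^ n) u - u with hsu
    have hsu0 : ∀ n, 0 ≤ su n := fun n => sub_nonneg.2 (hmonotone n)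
    have hsu_step : ∀ n, su (n + 1) = su n + (T ^ n) v := by
      intro n
      have h1 : (T ^ (n + 1)) u = (T ^ n) (T u) := by
        rw [pow_succ, ContinuousLinearMap.mul_apply]
      simp only [hsu, hv, map_sub, h1]
      abel
    have hsu_mono : ∀ n m : ℕ, n ≤ m → su n ≤ su m := by
      intro n m h
      refine Nat.le_induction le_rfl (fun m _ ih => ?_) m h
      rw [hsu_step m]
      exact le_trans ih (le_add_of_nonneg_right (Tpow_pos hTpos m hv0))
    -- norm bound
    have hM : ∀ n : ℕ, ‖su n‖ ≤ 2 * ((C + 1) * ‖u‖) := by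
      intro n
      have hhead0 : Tendsto (fun j => ∑ k ∈ Finset.range n, a j k) atTop (𝓝 0) := by
        have h0 := tendsto_finset_sum (Finset.range n)
          (fun k (_ : k ∈ Finset.range n) => hatend k)
        simpa using h0
      obtain ⟨j, hj⟩ := (hhead0.eventually_lt_const (by norm_num : (0:ℝ) < 2⁻¹)).exists
      have hsummand : HasSum (fun k => a j k • su k) ((fT j) u - u) := by
        have h1 := happly j u
        have h2 : HasSum (fun k => a j k • u) u := by
          simpa using (ha1 j).smul_const u
        have h3 := h1.sub h2
        have h4 : (fun k => a j k • (T ^ k) u - a j k • u) = fun k => a j k • su k := by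
          funext k
          rw [← smul_sub]
        rwa [h4] at h3
      have hβsum : HasSum (fun k => a j (k + n)) (1 - ∑ k ∈ Finset.range n, a j k) := by
        refine (hasSum_nat_add_iff (f := a j) n).2 ?_
        rw [sub_add_cancel]
        exact ha1 j
      set β : ℝ := 1 - ∑ k ∈ Finset.range n, a j k with hβ
      have hβhalf : (2⁻¹ : ℝ) ≤ β := by
        rw [hβ]
        linarith
      set S : E := (fT j) u - u with hS
      set head : E := ∑ k ∈ Finset.range n, a j k • su k with hhead
      have h4 : HasSum (fun k => a j (k + n) • su (k + n)) (S - head) := by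
        refine (hasSum_nat_add_iff (f := fun k => a j k • su k) n).2 ?_
        rw [sub_add_cancel]
        exact hsummand
      have h5 : HasSum (fun k => a j (k + n) • su n) (β • su n) := hβsum.smul_const (su n)
      have h6 : β • su n ≤ S - head :=
        hasSum_le' h5 h4
          (fun k => smul_le_smul_real (ha0 j _) (hsu_mono n (k + n) (by omega)))
      have h7 : 0 ≤ head :=
        sum_nonneg' _ _ (fun k => smul_nonneg_real (ha0 j k) (hsu0 k))
      have h8 : β • su n ≤ S := le_trans h6 (by
        have := sub_le_self S h7
        exact this)
      have h9 : (2⁻¹ : ℝ) • su n ≤ β • su n :=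
        smul_le_smul_coeff (hsu0 n) (by norm_num) hβhalf
      have h10 : 0 ≤ S :=
        le_trans (smul_nonneg_real (by norm_num) (hsu0 n)) (le_trans h9 h8)
      have h11 : ‖(2⁻¹ : ℝ) • su n‖ ≤ ‖S‖ := by
        refine ComplexBanachLattice.norm_mono _ _ ?_
        rw [ComplexBanachLattice.cabs_of_nonneg _ (smul_nonneg_real (by norm_num) (hsu0 n)),
          ComplexBanachLattice.cabs_of_nonneg _ h10]
        exact le_trans h9 h8
      have h12 : ‖S‖ ≤ C * ‖u‖ + ‖u‖ := by
        have ha := (fT j).le_opNorm u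
        have hb := mul_le_mul_of_nonneg_right (hC j) (norm_nonneg u)
        calc ‖S‖ ≤ ‖(fT j) u‖ + ‖u‖ := norm_sub_le _ _
        _ ≤ C * ‖u‖ + ‖u‖ := by linarith
      have h13 : ‖(2⁻¹ : ℝ) • su n‖ = 2⁻¹ * ‖su n‖ := by
        rw [norm_smul]
        norm_num
      rw [h13] at h11
      linarith
    -- orbit sums tend to zero for positive functionals
    have hsu_eq : ∀ n, su n = ∑ k ∈ Finset.range n, (T ^ k) v := by
      intro n
      induction n with
      | zero => simp [hsu]
      | succ n ih => rw [Finset.sum_range_succ, ← ih, hsu_step]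
    have horbit : ∀ φ : E →L[ℝ] ℝ, (∀ w : E, 0 ≤ w → 0 ≤ φ w) →
        Tendsto (fun t => φ ((T ^ t) v)) atTop (𝓝 0) := by
      intro φ hφ
      have hbound : ∀ n, ∑ k ∈ Finset.range n, φ ((T ^ k) v)
          ≤ ‖φ‖ * (2 * ((C + 1) * ‖u‖)) := by
        intro n
        have h1 : φ (su n) = ∑ k ∈ Finset.range n, φ ((T ^ k) v) := by
          rw [hsu_eq, map_sum]
        rw [← h1]
        have h2 : ‖φ (su n)‖ ≤ ‖φ‖ * ‖su n‖ := φ.le_opNorm _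
        rw [Real.norm_eq_abs] at h2
        calc φ (su n) ≤ |φ (su n)| := le_abs_self _
        _ ≤ ‖φ‖ * ‖su n‖ := h2
        _ ≤ ‖φ‖ * (2 * ((C + 1) * ‖u‖)) :=
            mul_le_mul_of_nonneg_left (hM n) (norm_nonneg φ)
      have hsummable : Summable (fun t => φ ((T ^ t) v)) :=
        summable_of_sum_range_le (fun t => hφ _ (Tpow_pos hTpos t hv0)) hbound
      exact hsummable.tendsto_atTop_zero
    -- the closed ideal
    have hIcI := dualIdeal_isClosedIdeal T v
    have hITinv := dualIdeal_Tinv hTpos v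
    have hvmem : v ∈ dualIdeal T v := by
      intro φ hφ hkill
      rw [ComplexBanachLattice.cabs_of_nonneg _ hv0]
      have h0 := hkill 0
      simpa using h0
    rcases hirr _ hIcI hITinv with h0 | huniv
    · rw [h0] at hvmem
      exact hvz hvmem
    have humem : u ∈ dualIdeal T v := by
      rw [huniv]
      trivial
    obtain ⟨φ₀, hφ₀pos, hφ₀u⟩ := exists_pos_functional u hu0 hune
    obtain ⟨ψ, hψspec⟩ := exists_psi U fT hC φ₀
    have hψpos : ∀ w : E, 0 ≤ w → 0 ≤ ψ w := by
      intro w hw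
      exact ge_of_tendsto (hψspec w)
        (Filter.Eventually.of_forall (fun j => hφ₀pos _ (hfTpos j w hw)))
    have hψkill : ∀ i : ℕ, ψ ((T ^ i) v) = 0 := by
      intro i
      set g : ℕ → ℝ := fun t => φ₀ ((T ^ t) v) with hg
      have hg0 : ∀ t, 0 ≤ g t := fun t => hφ₀pos _ (Tpow_pos hTpos t hv0)
      have hglim : Tendsto g atTop (𝓝 0) := horbit φ₀ hφ₀pos
      obtain ⟨Bd, hBd⟩ := hglim.bddAbove_range
      have hgB : ∀ t, g t ≤ Bd := fun t => hBd (Set.mem_range_self t)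
      have hDL := ws_limit ha0 ha1 hatend hg0 hgB hglim i
      have hval : ∀ j, φ₀ ((fT j) ((T ^ i) v)) = ∑' k, a j k * g (k + i) := by
        intro j
        have h1 := (happly j ((T ^ i) v)).mapL φ₀
        have h2 : (fun k => φ₀ (a j k • (T ^ k) ((T ^ i) v)))
            = fun k => a j k * g (k + i) := by
          funext k
          rw [map_smul, smul_eq_mul, hg]
          congr 2
          rw [← pow_apply_add]
        rw [h2] at h1
        exact h1.tsum_eq.symm
      have hnet : Tendsto (fun j => φ₀ ((fT j) ((T ^ i) v))) atTop (𝓝 0) := by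
        have hfun : (fun j => φ₀ ((fT j) ((T ^ i) v)))
            = fun j => ∑' k, a j k * g (k + i) := funext hval
        rw [hfun]
        exact hDL
      exact tendsto_nhds_unique (hψspec _) (hnet.mono_left hUle)
    have hψu : φ₀ u ≤ ψ u := by
      refine ge_of_tendsto (hψspec u) (Filter.Eventually.of_forall (fun j => ?_))
      have h1 : u ≤ (fT j) u := by
        have h2 : HasSum (fun k => a j k • u) u := by
          simpa using (ha1 j).smul_const u
        exact hasSum_le' h2 (happly j u)
          (fun k => smul_le_smul_real (ha0 j k) (hmonotone k))
      exact pos_functional_mono hφ₀pos h1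
    have hfinal := humem ψ hψpos hψkill
    rw [ComplexBanachLattice.cabs_of_nonneg _ hu0] at hfinal
    linarith
  refine ⟨?_, keyb⟩
  -- part (a)
  intro x hx0 hxne hten
  obtain ⟨μ, z, hzne, hμ, heig⟩ := hpps
  have hfix : T (ComplexBanachLattice.cabs z) = ComplexBanachLattice.cabs z :=
    keyb μ z hμ hzne heig
  set u : E := ComplexBanachLattice.cabs z with hu
  have hu0 : 0 ≤ u := ComplexBanachLattice.cabs_nonneg z
  have hune : u ≠ 0 := fun h => hzne ((ComplexBanachLattice.cabs_eq_zero_iff z).1 h)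
  have hIcI := dualIdeal_isClosedIdeal T x
  have hITinv := dualIdeal_Tinv hTpos x
  have hxmem : x ∈ dualIdeal T x := by
    intro φ hφ hkill
    rw [ComplexBanachLattice.cabs_of_nonneg _ hx0]
    have h0 := hkill 0
    simpa using h0
  rcases hirr _ hIcI hITinv with h0 | huniv
  · rw [h0] at hxmem
    exact hxne hxmem
  have humem : u ∈ dualIdeal T x := by
    rw [huniv]
    trivial
  obtain ⟨φ₀, hφ₀pos, hφ₀u⟩ := exists_pos_functional u hu0 hune
  obtain ⟨ψ, hψspec⟩ := exists_psi U fT hC φ₀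
  have hψpos : ∀ w : E, 0 ≤ w → 0 ≤ ψ w := by
    intro w hw
    exact ge_of_tendsto (hψspec w)
      (Filter.Eventually.of_forall (fun j => hφ₀pos _ (hfTpos j w hw)))
  have hψkill : ∀ i : ℕ, ψ ((T ^ i) x) = 0 := by
    intro i
    set g : ℕ → ℝ := fun t => φ₀ ((T ^ t) x) with hg
    have hg0 : ∀ t, 0 ≤ g t := fun t => hφ₀pos _ (Tpow_pos hTpos t hx0)
    have hglim : Tendsto g atTop (𝓝 0) := by
      have h1 : Tendsto (fun t : ℕ => φ₀ ((T ^ t) x)) atTop (𝓝 (φ₀ 0)) :=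
        (φ₀.continuous.tendsto 0).comp hten
      simpa [hg] using h1
    obtain ⟨Bd, hBd⟩ := hglim.bddAbove_range
    have hgB : ∀ t, g t ≤ Bd := fun t => hBd (Set.mem_range_self t)
    have hDL := ws_limit ha0 ha1 hatend hg0 hgB hglim i
    have hval : ∀ j, φ₀ ((fT j) ((T ^ i) x)) = ∑' k, a j k * g (k + i) := by
      intro j
      have h1 := (happly j ((T ^ i) x)).mapL φ₀
      have h2 : (fun k => φ₀ (a j k • (T ^ k) ((T ^ i) x)))
          = fun k => a j k * g (k + i) := by
        funext k
        rw [map_smul, smul_eq_mul, hg]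
        congr 2
        rw [← pow_apply_add]
      rw [h2] at h1
      exact h1.tsum_eq.symm
    have hnet : Tendsto (fun j => φ₀ ((fT j) ((T ^ i) x))) atTop (𝓝 0) := by
      have hfun : (fun j => φ₀ ((fT j) ((T ^ i) x)))
          = fun j => ∑' k, a j k * g (k + i) := funext hval
      rw [hfun]
      exact hDL
    exact tendsto_nhds_unique (hψspec _) (hnet.mono_left hUle)
  have hψu : ψ u = φ₀ u := by
    have hconst : ∀ j, (fT j) u = u := by
      intro j
      have h2 : HasSum (fun k => a j k • u) u := by
        simpa using (ha1 j).smul_const u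
      have h3 : HasSum (fun k => a j k • u) ((fT j) u) := by
        have h4 := happly j u
        have h5 : (fun k => a j k • (T ^ k) u) = fun k => a j k • u := by
          funext k
          rw [pow_apply_fixed hfix k]
        rwa [h5] at h4
      exact h3.unique h2
    have hconst2 : Tendsto (fun j => φ₀ ((fT j) u)) (U : Filter J) (𝓝 (φ₀ u)) := by
      have : (fun j => φ₀ ((fT j) u)) = fun _ => φ₀ u := by
        funext j
        rw [hconst j]
      rw [this]
      exact tendsto_const_nhds
    exact tendsto_nhds_unique (hψspec u) hconst2
  have hfinal := humem ψ hψpos hψkill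
  rw [ComplexBanachLattice.cabs_of_nonneg _ hu0] at hfinal
  rw [hψu] at hfinal
  linarith
end
end
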